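/- arXiv:2405.20809 — 6 statements merged into one kernel-verified Lean document; each statement's English description precedes it below -/
import Mathlib

section
/- Let G be a compact Lie group, X a G-space, n ≥ 2 an integer, and let a ∈ X with stabilizer subgroup H = {g ∈ G : g·a = a}. Then cat_H(X^{n−1}) ≤ TC_{G,n}(X), where X^{n−1} carries the diagonal H-action. -/
open Set

noncomputable section

/-- Two maps `f g : X → Y` are `G`-homotopic on a subset `S ⊆ X`, with respect to the
actions `σX` on `X` and `σY` on `Y`. -/
def GHomotopicOn (G : Type*) {X Y : Type*} [TopologicalSpace X] [TopologicalSpace Y]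
    (σX : G → X → X) (σY : G → Y → Y) (f g : X → Y) (S : Set X) : Prop :=
  ∃ H : X × unitInterval → Y,
    ContinuousOn H (S ×ˢ (Set.univ : Set unitInterval)) ∧
    (∀ x ∈ S, H (x, 0) = f x) ∧
    (∀ x ∈ S, H (x, 1) = g x) ∧
    (∀ a : G, ∀ x ∈ S, ∀ t, H (σX a x, t) = σY a (H (x, t)))

/-- The equivariant sectional category `secat_G(p)` of a map `p : E → B`, with respect to
actions `σE` on `E` and `σB` on `B`: the least `k` such that `B` is covered by `k`
`G`-invariant open sets, each admitting a continuous equivariant homotopy section of `p`;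
`⊤` if there is no such `k`. -/
def eqSecat (G : Type*) {E B : Type*} [TopologicalSpace E] [TopologicalSpace B]
    (σE : G → E → E) (σB : G → B → B) (p : E → B) : ℕ∞ :=
  sInf {N : ℕ∞ | ∃ k : ℕ, N = (k : ℕ∞) ∧ ∃ U : Fin k → Set B,
    (∀ i, IsOpen (U i)) ∧
    (∀ i, ∀ a : G, ∀ b ∈ U i, σB a b ∈ U i) ∧
    (∀ b : B, ∃ i, b ∈ U i) ∧
    (∀ i, ∃ s : B → E, ContinuousOn s (U i) ∧
      (∀ a : G, ∀ b ∈ U i, s (σB a b) = σE a (s b)) ∧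
      GHomotopicOn G σB σB (p ∘ s) id (U i))}

/-- A `G`-invariant open subset `U` of `X` is `G`-categorical if the inclusion `U ↪ X`
is `G`-homotopic to a map taking values in a single orbit. -/
def GCategoricalSet (G : Type*) {X : Type*} [TopologicalSpace X]
    (σ : G → X → X) (U : Set X) : Prop :=
  IsOpen U ∧ (∀ a : G, ∀ x ∈ U, σ a x ∈ U) ∧
  ∃ x₀ : X, ∃ H : X × unitInterval → X,
    ContinuousOn H (U ×ˢ (Set.univ : Set unitInterval)) ∧
    (∀ x ∈ U, H (x, 0) = x) ∧
    (∀ x ∈ U, ∃ a : G, H (x, 1) = σ a x₀) ∧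
    (∀ a : G, ∀ x ∈ U, ∀ t, H (σ a x, t) = σ a (H (x, t)))

/-- The equivariant (Lusternik–Schnirelmann) category `cat_G(X)`: the least number of
`G`-categorical open sets covering `X`. -/
def eqCat (G : Type*) {X : Type*} [TopologicalSpace X] (σ : G → X → X) : ℕ∞ :=
  sInf {N : ℕ∞ | ∃ k : ℕ, N = (k : ℕ∞) ∧ ∃ U : Fin k → Set X,
    (∀ x : X, ∃ i, x ∈ U i) ∧ (∀ i, GCategoricalSet G σ (U i))}

/-- The time `i/(n-1)` in the unit interval, for `i : Fin n`. -/
def seqTime (n : ℕ) (i : Fin n) : unitInterval :=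
  ⟨(i : ℝ) / ((n : ℝ) - 1), by
    have h0 : 0 < n := i.pos
    have h1 : (0 : ℝ) ≤ (n : ℝ) - 1 := by
      have : (1 : ℝ) ≤ (n : ℝ) := by exact_mod_cast h0
      linarith
    refine ⟨div_nonneg (Nat.cast_nonneg _) h1, ?_⟩
    rcases eq_or_lt_of_le h1 with h | h
    · rw [← h, div_zero]; norm_num
    · rw [div_le_one h]
      have : ((i : ℕ) : ℝ) + 1 ≤ (n : ℝ) := by exact_mod_cast i.is_lt
      linarith⟩

/-- The generalized free path space fibration
`π_n : X^I → X^n`, `γ ↦ (γ(0), γ(1/(n-1)), …, γ(1))`. -/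
def piNMap (X : Type*) [TopologicalSpace X] (n : ℕ) :
    C(unitInterval, X) → (Fin n → X) :=
  fun γ i => γ (seqTime n i)

/-- The action induced on the free path space `X^I` by an action on `X`. -/
def pathAct {G X : Type*} [TopologicalSpace X] (σ : G → X → X)
    (hc : ∀ a : G, Continuous (σ a)) : G → C(unitInterval, X) → C(unitInterval, X) :=
  fun a γ => ⟨fun t => σ a (γ t), (hc a).comp γ.continuous⟩

/-- The diagonal action on `X^n` induced by an action on `X`. -/
def diagAct {G X : Type*} (σ : G → X → X) (n : ℕ) : G → (Fin n → X) → (Fin n → X) :=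
  fun a x i => σ a (x i)

/-- The sequential equivariant topological complexity `TC_{G,n}(X) := secat_G(π_n)`. -/
def eqTC (G : Type*) {X : Type*} [TopologicalSpace X] (σ : G → X → X)
    (hc : ∀ a : G, Continuous (σ a)) (n : ℕ) : ℕ∞ :=
  eqSecat G (pathAct σ hc) (diagAct σ n) (piNMap X n)

/-- The `n`-fold fibre product `E^n_B` of `p : E → B`. -/
def FibProd {E B : Type*} (p : E → B) (n : ℕ) : Type _ :=
  {x : Fin n → E // ∀ i j, p (x i) = p (x j)}

instance {E B : Type*} [TopologicalSpace E] (p : E → B) (n : ℕ) :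
    TopologicalSpace (FibProd p n) :=
  inferInstanceAs (TopologicalSpace {x : Fin n → E // ∀ i j, p (x i) = p (x j)})

/-- The space `E^I_B` of paths in `E` lying in a single fibre of `p : E → B`. -/
def ParPath {E B : Type*} [TopologicalSpace E] (p : E → B) : Type _ :=
  {γ : C(unitInterval, E) // ∀ s t : unitInterval, p (γ s) = p (γ t)}

instance {E B : Type*} [TopologicalSpace E] (p : E → B) :
    TopologicalSpace (ParPath p) :=
  inferInstanceAs (TopologicalSpace
    {γ : C(unitInterval, E) // ∀ s t : unitInterval, p (γ s) = p (γ t)})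

/-- The parametrized endpoint fibration `Π_n : E^I_B → E^n_B`. -/
def PiN {E B : Type*} [TopologicalSpace E] (p : E → B) (n : ℕ) :
    ParPath p → FibProd p n :=
  fun γ => ⟨fun i => γ.1 (seqTime n i), fun _ _ => γ.2 _ _⟩

/-- The action induced on `E^n_B` by a fibrewise-compatible action on `E`. -/
def fibProdAct {G E B : Type*} (σE : G → E → E) (p : E → B)
    (hp : ∀ a : G, ∀ e e' : E, p e = p e' → p (σE a e) = p (σE a e')) (n : ℕ) :
    G → FibProd p n → FibProd p n :=
  fun a x => ⟨fun i => σE a (x.1 i), fun i j => hp a _ _ (x.2 i j)⟩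

/-- The action induced on `E^I_B` by a fibrewise-compatible action on `E`. -/
def parPathAct {G E B : Type*} [TopologicalSpace E] (σE : G → E → E)
    (hc : ∀ a : G, Continuous (σE a)) (p : E → B)
    (hp : ∀ a : G, ∀ e e' : E, p e = p e' → p (σE a e) = p (σE a e')) :
    G → ParPath p → ParPath p :=
  fun a γ => ⟨⟨fun t => σE a (γ.1 t), (hc a).comp γ.1.continuous⟩,
    fun s t => hp a _ _ (γ.2 s t)⟩

/-- The sequential equivariant parametrized topological complexity
`TC_{G,n}[p : E → B] := secat_G(Π_n : E^I_B → E^n_B)`. -/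
def eqPTC (G : Type*) {E B : Type*} [TopologicalSpace E] (σE : G → E → E)
    (hc : ∀ a : G, Continuous (σE a)) (p : E → B)
    (hp : ∀ a : G, ∀ e e' : E, p e = p e' → p (σE a e) = p (σE a e')) (n : ℕ) : ℕ∞ :=
  eqSecat G (parPathAct σE hc p hp) (fibProdAct σE p hp n) (PiN p n)

/-- `σ` is a continuous action of the topological group `G` on `X`,
i.e. `X` is a `G`-space. -/
def IsGAction (G : Type*) [Group G] [TopologicalSpace G] {X : Type*} [TopologicalSpace X]
    (σ : G → X → X) : Prop :=
  (∀ x, σ 1 x = x) ∧ (∀ a b x, σ (a * b) x = σ a (σ b x)) ∧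
  Continuous (fun q : G × X => σ q.1 q.2)

/-- `p : E → B` is a `G`-fibration: a continuous equivariant map with the `G`-homotopy
lifting property with respect to all `G`-spaces. -/
def IsGFibration (G : Type*) [Group G] [TopologicalSpace G] {E : Type u} {B : Type v}
    [TopologicalSpace E] [TopologicalSpace B]
    (σE : G → E → E) (σB : G → B → B) (p : E → B) : Prop :=
  Continuous p ∧ (∀ a e, p (σE a e) = σB a (p e)) ∧
  ∀ (X : Type (max u v)) (_ : TopologicalSpace X) (σX : G → X → X), IsGAction G σX →
    ∀ (f : X → E) (h : X × unitInterval → B),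
      Continuous f → (∀ a x, f (σX a x) = σE a (f x)) →
      Continuous h → (∀ a x t, h (σX a x, t) = σB a (h (x, t))) →
      (∀ x, h (x, 0) = p (f x)) →
      ∃ hl : X × unitInterval → E, Continuous hl ∧
        (∀ a x t, hl (σX a x, t) = σE a (hl (x, t))) ∧
        (∀ x, hl (x, 0) = f x) ∧ (∀ x t, p (hl (x, t)) = h (x, t))

/-- A `G`-space is `G`-connected if all fixed point sets of closed subgroups
are path-connected. -/
def GConnected (G : Type*) [Group G] [TopologicalSpace G] {X : Type*} [TopologicalSpace X]
    (σ : G → X → X) : Prop :=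
  ∀ H : Subgroup G, IsClosed (H : Set G) →
    IsPathConnected {x : X | ∀ h ∈ H, σ h x = x}

/-- A `G`-space is `G`-contractible if its identity map is `G`-homotopic to a map
taking values in a single orbit. -/
def GContractible (G : Type*) {X : Type*} [TopologicalSpace X] (σ : G → X → X) : Prop :=
  ∃ x₀ : X, ∃ H : X × unitInterval → X, Continuous H ∧
    (∀ x, H (x, 0) = x) ∧
    (∀ x, ∃ a : G, H (x, 1) = σ a x₀) ∧
    (∀ a : G, ∀ x t, H (σ a x, t) = σ a (H (x, t)))

/-- Fibrewise `G`-homotopy between fibrewise maps `f g : E → E'` over `B`. -/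
def FibrewiseGHomotopic (G : Type*) {E E' B : Type*} [TopologicalSpace E]
    [TopologicalSpace E'] (σE : G → E → E) (σE' : G → E' → E')
    (p : E → B) (p' : E' → B) (f g : E → E') : Prop :=
  ∃ H : E × unitInterval → E', Continuous H ∧
    (∀ x, H (x, 0) = f x) ∧ (∀ x, H (x, 1) = g x) ∧
    (∀ a : G, ∀ x t, H (σE a x, t) = σE' a (H (x, t))) ∧
    (∀ x t, p' (H (x, t)) = p x)

end
/-- ContinuousOn version of `Continuous.if_le`. -/
theorem myContinuousOn_if_le {α β γ : Type*} [TopologicalSpace α] [TopologicalSpace β]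
    [LinearOrder β] [OrderClosedTopology β] [TopologicalSpace γ]
    {f g : α → β} {f' g' : α → γ} {s : Set α} [∀ x, Decidable (f x ≤ g x)]
    (hf' : ContinuousOn f' s) (hg' : ContinuousOn g' s)
    (hf : Continuous f) (hg : Continuous g)
    (hfg : ∀ x ∈ s, f x = g x → f' x = g' x) :
    ContinuousOn (fun x => if f x ≤ g x then f' x else g' x) s := by
  rw [continuousOn_iff_continuous_restrict] at hf' hg' ⊢
  exact Continuous.if_le (f := fun x : s => f x) (g := fun x : s => g x)
    hf' hg' (hf.comp continuous_subtype_val) (hg.comp continuous_subtype_val)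
    (fun x h => hfg x x.2 h)

/-- The embedding `X^{n-1} → X^n` prepending the basepoint `a`. -/
def extMap {X : Type*} (a : X) (n : ℕ) (x : Fin (n - 1) → X) : Fin n → X :=
  fun k => if hk : (k : ℕ) = 0 then a
    else x ⟨(k : ℕ) - 1, by have := k.isLt; omega⟩

/-- The index `i + 1` in `Fin n`, for `i : Fin (n-1)`. -/
def kidx {n : ℕ} (i : Fin (n - 1)) : Fin n := ⟨(i : ℕ) + 1, by have := i.isLt; omega⟩

lemma extMap_kidx {X : Type*} (a : X) {n : ℕ} (x : Fin (n - 1) → X) (i : Fin (n - 1)) :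
    extMap a n x (kidx i) = x i := by
  have h : ((kidx i : Fin n) : ℕ) = (i : ℕ) + 1 := rfl
  simp only [extMap]
  rw [dif_neg (by omega)]
  exact congrArg x (Fin.ext (by simp [h]))

lemma continuous_extMap {X : Type*} [TopologicalSpace X] (a : X) (n : ℕ) :
    Continuous (extMap a n) := by
  apply continuous_pi
  intro k
  simp only [extMap]
  split
  · exact continuous_const
  · exact continuous_apply _
theorem stmt_0 {G : Type*} [Group G] [TopologicalSpace G] [IsTopologicalGroup G]
    [CompactSpace G] {X : Type*} [TopologicalSpace X] [MulAction G X] [ContinuousSMul G X]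
    (n : ℕ) (hn : 2 ≤ n) (a : X) :
    eqCat ↥(MulAction.stabilizer G a)
        (diagAct (fun (h : ↥(MulAction.stabilizer G a)) (x : X) => (h : G) • x) (n - 1)) ≤
      eqTC G (fun (g : G) (x : X) => g • x) (fun g => continuous_const_smul g) n := by
  classical
  set m := n - 1 with hm
  set σH : ↥(MulAction.stabilizer G a) → (Fin m → X) → (Fin m → X) :=
    diagAct (fun (h : ↥(MulAction.stabilizer G a)) (x : X) => (h : G) • x) m with hσH
  set σG : G → (Fin n → X) → (Fin n → X) := diagAct (fun (g : G) (x : X) => g • x) n with hσG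
  -- equivariance of the embedding
  have hjeq : ∀ (h : ↥(MulAction.stabilizer G a)) (x : Fin m → X),
      extMap a n (σH h x) = σG (h : G) (extMap a n x) := by
    intro h x
    funext k
    by_cases hk : (k : ℕ) = 0
    · simp only [hσG, extMap, diagAct, dif_pos hk]
      exact (MulAction.mem_stabilizer_iff.mp h.2).symm
    · simp only [hσH, hσG, extMap, diagAct, dif_neg hk]
  unfold eqTC eqSecat eqCat
  apply sInf_le_sInf
  rintro N ⟨k, rfl, U, hUopen, hUinv, hUcov, hUsec⟩
  refine ⟨k, rfl, fun i => extMap a n ⁻¹' U i, fun x => hUcov (extMap a n x), ?_⟩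
  intro i
  obtain ⟨s, hscont, hseq, K, hKcont, hK0, hK1, hKeq⟩ := hUsec i
  set V : Set (Fin m → X) := extMap a n ⁻¹' U i with hV
  have hVmem : ∀ x ∈ V, extMap a n x ∈ U i := fun x hx => hx
  refine ⟨(hUopen i).preimage (continuous_extMap a n), ?_, ?_⟩
  · intro h x hx
    show extMap a n (σH h x) ∈ U i
    rw [hjeq]
    exact hUinv i (h : G) _ (hVmem x hx)
  -- the categorical contraction
  set pr : ℝ → unitInterval := Set.projIcc 0 1 zero_le_one with hpr
  have pr1 : ∀ r : ℝ, 1 ≤ r → pr r = 1 := by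
    intro r hr
    apply Subtype.ext
    show max 0 (min 1 r) = 1
    rw [min_eq_left hr, max_eq_right zero_le_one]
  have pr0 : ∀ r : ℝ, r ≤ 0 → pr r = 0 := by
    intro r hr
    apply Subtype.ext
    show max 0 (min 1 r) = 0
    rw [max_eq_left (le_trans (min_le_right 1 r) hr)]
  set F : (Fin m → X) × unitInterval → (Fin m → X) := fun z j =>
    if (z.2 : ℝ) ≤ 1 / 3 then K (extMap a n z.1, pr (1 - 3 * (z.2 : ℝ))) (kidx j)
    else if (z.2 : ℝ) ≤ 2 / 3 then
      (s (extMap a n z.1)) (pr ((2 - 3 * (z.2 : ℝ)) * ((seqTime n (kidx j) : unitInterval) : ℝ)))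
    else K (extMap a n z.1, pr (3 * (z.2 : ℝ) - 2)) (⟨0, by omega⟩ : Fin n)
    with hF
  have seqTime0 : seqTime n (⟨0, by omega⟩ : Fin n) = 0 := by
    apply Subtype.ext
    show ((((⟨0, by omega⟩ : Fin n) : ℕ) : ℝ)) / ((n : ℝ) - 1) = 0
    norm_num
  refine ⟨fun _ => a, F, ?_, ?_, ?_, ?_⟩
  · -- continuity
    rw [continuousOn_pi]
    intro j
    have hmapsTo : Set.MapsTo (fun z : (Fin m → X) × unitInterval => z.1)
        (V ×ˢ (Set.univ : Set unitInterval)) V := fun z hz => hz.1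
    -- branch 1
    have hφ1 : Continuous (fun z : (Fin m → X) × unitInterval =>
        ((extMap a n z.1, pr (1 - 3 * (z.2 : ℝ))) : (Fin n → X) × unitInterval)) := by
      refine Continuous.prodMk ((continuous_extMap a n).comp continuous_fst) ?_
      exact continuous_projIcc.comp (by fun_prop)
    have hc1 : ContinuousOn (fun z : (Fin m → X) × unitInterval =>
        K (extMap a n z.1, pr (1 - 3 * (z.2 : ℝ))) (kidx j))
        (V ×ˢ (Set.univ : Set unitInterval)) := by
      refine (continuous_apply (kidx j)).comp_continuousOn ?_
      exact hKcont.comp hφ1.continuousOn (fun z hz => ⟨hVmem _ hz.1, trivial⟩)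
    -- branch 2
    have hc2 : ContinuousOn (fun z : (Fin m → X) × unitInterval =>
        (s (extMap a n z.1)) (pr ((2 - 3 * (z.2 : ℝ)) * ((seqTime n (kidx j) : unitInterval) : ℝ))))
        (V ×ˢ (Set.univ : Set unitInterval)) := by
      have heval : Continuous (fun q : C(unitInterval, X) × unitInterval => q.1 q.2) :=
        continuous_eval
      have hinner : ContinuousOn (fun z : (Fin m → X) × unitInterval =>
          ((s (extMap a n z.1),
            pr ((2 - 3 * (z.2 : ℝ)) * ((seqTime n (kidx j) : unitInterval) : ℝ))) :
            C(unitInterval, X) × unitInterval)) (V ×ˢ (Set.univ : Set unitInterval)) := by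
        refine ContinuousOn.prodMk ?_ ?_
        · exact hscont.comp ((continuous_extMap a n).comp continuous_fst).continuousOn
            (fun z hz => hVmem _ hz.1)
        · exact (continuous_projIcc.comp (by fun_prop)).continuousOn
      exact heval.comp_continuousOn hinner
    -- branch 3
    have hc3 : ContinuousOn (fun z : (Fin m → X) × unitInterval =>
        K (extMap a n z.1, pr (3 * (z.2 : ℝ) - 2)) (⟨0, by omega⟩ : Fin n))
        (V ×ˢ (Set.univ : Set unitInterval)) := by
      refine (continuous_apply _).comp_continuousOn ?_
      refine hKcont.comp ?_ (fun z hz => ⟨hVmem _ hz.1, trivial⟩)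
      refine (Continuous.prodMk ((continuous_extMap a n).comp continuous_fst) ?_).continuousOn
      exact continuous_projIcc.comp (by fun_prop)
    -- glue
    refine myContinuousOn_if_le ?_ ?_ (by fun_prop) continuous_const ?_
    · exact hc1
    · refine myContinuousOn_if_le hc2 hc3 (by fun_prop) continuous_const ?_
      -- boundary at 2/3
      intro z hz ht
      have h1 : pr ((2 - 3 * (z.2 : ℝ)) * ((seqTime n (kidx j) : unitInterval) : ℝ)) = 0 := by
        rw [ht]; norm_num; exact pr0 0 le_rfl
      have h2 : pr (3 * (z.2 : ℝ) - 2) = 0 := by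
        rw [ht]; norm_num; exact pr0 0 le_rfl
      rw [h1, h2]
      have := congrFun (hK0 _ (hVmem _ hz.1)) (⟨0, by omega⟩ : Fin n)
      simp only [Function.comp_apply, piNMap] at this
      rw [this, seqTime0]
    · -- boundary at 1/3
      intro z hz ht
      have h2 : ((1:ℝ)/3 : ℝ) ≤ 2/3 := by norm_num
      rw [ht]
      rw [if_pos h2]
      have h1 : pr (1 - 3 * ((1:ℝ)/3)) = 0 := by norm_num; exact pr0 0 le_rfl
      have h3 : pr ((2 - 3 * ((1:ℝ)/3)) * ((seqTime n (kidx j) : unitInterval) : ℝ))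
          = seqTime n (kidx j) := by
        have : (2 - 3 * ((1:ℝ)/3)) * ((seqTime n (kidx j) : unitInterval) : ℝ)
            = ((seqTime n (kidx j) : unitInterval) : ℝ) := by ring
        rw [this, hpr]
        exact Set.projIcc_of_mem zero_le_one (seqTime n (kidx j)).2
      rw [h1, h3]
      have := congrFun (hK0 _ (hVmem _ hz.1)) (kidx j)
      simp only [Function.comp_apply, piNMap] at this
      rw [this]
  · -- H(x,0) = x
    intro x hx
    funext j
    have ht : (((0 : unitInterval) : ℝ)) ≤ 1/3 := by norm_num
    show (if (((0 : unitInterval) : ℝ)) ≤ 1 / 3 then _ else _) = x j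
    rw [if_pos ht]
    have h1 : pr (1 - 3 * ((0 : unitInterval) : ℝ)) = 1 := by
      apply pr1; norm_num
    rw [h1]
    have := congrFun (hK1 _ (hVmem _ hx)) (kidx j)
    simp only [id_eq] at this
    rw [this, extMap_kidx]
  · -- H(x,1) lands in the orbit of the constant point
    intro x hx
    refine ⟨1, ?_⟩
    funext j
    have ht1 : ¬ (((1 : unitInterval) : ℝ)) ≤ 1/3 := by norm_num
    have ht2 : ¬ (((1 : unitInterval) : ℝ)) ≤ 2/3 := by norm_num
    show (if (((1 : unitInterval) : ℝ)) ≤ 1 / 3 then _ else _) = _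
    rw [if_neg ht1, if_neg ht2]
    have h1 : pr (3 * ((1 : unitInterval) : ℝ) - 2) = 1 := by
      apply pr1; norm_num
    rw [h1]
    have := congrFun (hK1 _ (hVmem _ hx)) (⟨0, by omega⟩ : Fin n)
    simp only [id_eq] at this
    rw [this]
    show extMap a n x (⟨0, by omega⟩ : Fin n) = σH 1 (fun _ => a) j
    simp [hσH, diagAct, extMap, OneMemClass.coe_one, one_smul]
  · -- equivariance
    intro h x hx t
    funext j
    show (if ((t : ℝ)) ≤ 1 / 3 then _ else _) = (h : G) • (if ((t : ℝ)) ≤ 1 / 3 then _ else _)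
    split_ifs with h1 h2
    · rw [hjeq]
      exact congrFun (hKeq (h : G) _ (hVmem _ hx) _) (kidx j)
    · rw [hjeq, hseq (h : G) _ (hVmem _ hx)]
      rfl
    · rw [hjeq]
      exact congrFun (hKeq (h : G) _ (hVmem _ hx) _) (⟨0, by omega⟩ : Fin n)
end

section
/- Let G be a compact Lie group, p : E → B a G-fibration, and n ≥ 2. Then the G-map Π_n : E^I_B → E^n_B, γ ↦ (γ(0), γ(1/(n−1)), …, γ((n−2)/(n−1)), γ(1)), is a G-fibration. -/
open Set

noncomputable section AuxPiN

open Set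

/-- Clamp a real number into the unit interval. -/
noncomputable def pI : ℝ → unitInterval := Set.projIcc 0 1 zero_le_one

lemma pI_coe {r : ℝ} (h0 : 0 ≤ r) (h1 : r ≤ 1) : (pI r : ℝ) = r := by
  rw [pI, Set.projIcc_of_mem zero_le_one ⟨h0, h1⟩]

lemma pI_val (u : unitInterval) : pI (u : ℝ) = u := by
  apply Subtype.ext
  exact pI_coe u.2.1 u.2.2

lemma pI_zero : pI 0 = 0 := by
  apply Subtype.ext
  rw [pI_coe le_rfl zero_le_one]
  rfl

/-- The boundary-value profile function. -/
noncomputable def g0r (w : ℝ) : ℝ := max 0 (max (1 - 3*w) (3*w - 2))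

lemma g0r_cont : Continuous g0r := by
  unfold g0r; fun_prop

lemma g0r_nonneg (w : ℝ) : 0 ≤ g0r w := le_max_left _ _

lemma g0r_eq_left {w : ℝ} (hw : w ≤ 1/3) : g0r w = 1 - 3*w := by
  unfold g0r
  rw [max_eq_left (show 3*w - 2 ≤ 1 - 3*w by linarith),
    max_eq_right (show (0:ℝ) ≤ 1 - 3*w by linarith)]

lemma g0r_eq_mid {w : ℝ} (h1 : 1/3 ≤ w) (h2 : w ≤ 2/3) : g0r w = 0 := by
  unfold g0r
  rw [max_eq_left (max_le (by linarith) (by linarith))]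

lemma g0r_eq_right {w : ℝ} (hw : 2/3 ≤ w) : g0r w = 3*w - 2 := by
  unfold g0r
  rw [max_eq_right (show 1 - 3*w ≤ 3*w - 2 by linarith),
    max_eq_right (show (0:ℝ) ≤ 3*w - 2 by linarith)]

lemma g0r_mem {w : ℝ} (h0 : 0 ≤ w) (h1 : w ≤ 1) : g0r w ∈ Set.Icc (0:ℝ) 1 := by
  refine ⟨g0r_nonneg w, ?_⟩
  unfold g0r
  exact max_le zero_le_one (max_le (by linarith) (by linarith))

/-- The `s'`-coordinate of the square reparametrization. -/
noncomputable def Sr (s τ : ℝ) : ℝ := min s (min (3*τ) (3 - 3*τ))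

/-- The clamped interpolation parameter. -/
noncomputable def ur (s τ : ℝ) : ℝ := max 0 (min 1 ((3*τ - s)/(3 - 2*s)))

/-- The `w`-coordinate of the square reparametrization. -/
noncomputable def Wr (s τ : ℝ) : ℝ := ((1 - s) + ur s τ * (1 + 2*s))/3

lemma ur_mem (s τ : ℝ) : ur s τ ∈ Set.Icc (0:ℝ) 1 :=
  ⟨le_max_left _ _, max_le zero_le_one (min_le_left _ _)⟩

lemma Sr_mem {s τ : ℝ} (hs0 : 0 ≤ s) (hs1 : s ≤ 1) (hτ0 : 0 ≤ τ) (hτ1 : τ ≤ 1) :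
    Sr s τ ∈ Set.Icc (0:ℝ) 1 := by
  constructor
  · exact le_min hs0 (le_min (by linarith) (by linarith))
  · exact le_trans (min_le_left _ _) hs1

lemma Wr_bounds {s τ : ℝ} (hs0 : 0 ≤ s) (hs1 : s ≤ 1) :
    (1 - s)/3 ≤ Wr s τ ∧ Wr s τ ≤ (2 + s)/3 := by
  have hu := ur_mem s τ
  unfold Wr
  constructor
  · have : 0 ≤ ur s τ * (1 + 2*s) := mul_nonneg hu.1 (by linarith)
    apply div_le_div_of_nonneg_right ?_ (by norm_num)
    linarith
  · apply div_le_div_of_nonneg_right ?_ (by norm_num)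
    have : ur s τ * (1 + 2*s) ≤ 1 * (1 + 2*s) := mul_le_mul_of_nonneg_right hu.2 (by linarith)
    linarith

lemma Wr_mem {s τ : ℝ} (hs0 : 0 ≤ s) (hs1 : s ≤ 1) : Wr s τ ∈ Set.Icc (0:ℝ) 1 := by
  obtain ⟨hl, hr⟩ := Wr_bounds (τ := τ) hs0 hs1
  constructor
  · linarith [hl, show (0:ℝ) ≤ (1-s)/3 by linarith]
  · linarith [hr, show (2+s)/3 ≤ (1:ℝ) by linarith]

lemma Sr_t0 {s : ℝ} (hs0 : 0 ≤ s) : Sr s 0 = 0 := by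
  simp only [Sr, mul_zero, sub_zero]
  rw [min_eq_left (by norm_num : (0:ℝ) ≤ 3), min_eq_right hs0]

lemma Sr_t1 {s : ℝ} (hs0 : 0 ≤ s) : Sr s 1 = 0 := by
  simp only [Sr, mul_one]
  rw [show (3:ℝ) - 3 = 0 by ring, min_eq_right (by norm_num : (0:ℝ) ≤ 3),
    min_eq_right hs0]

lemma Sr_s0 {τ : ℝ} (hτ0 : 0 ≤ τ) (hτ1 : τ ≤ 1) : Sr 0 τ = 0 := by
  unfold Sr
  rw [min_eq_left]
  exact le_min (by linarith) (by linarith)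

lemma Wr_t0 {s : ℝ} (hs0 : 0 ≤ s) (hs1 : s ≤ 1) : Wr s 0 = (1 - s)/3 := by
  have hu : ur s 0 = 0 := by
    unfold ur
    rw [max_eq_left]
    refine le_trans (min_le_right _ _) ?_
    apply div_nonpos_of_nonpos_of_nonneg <;> linarith
  unfold Wr
  rw [hu]; ring

lemma Wr_t1 {s : ℝ} (hs0 : 0 ≤ s) (hs1 : s ≤ 1) : Wr s 1 = (2 + s)/3 := by
  have hden : (0:ℝ) < 3 - 2*s := by linarith
  have h1 : (1:ℝ) ≤ (3*1 - s)/(3 - 2*s) := by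
    rw [le_div_iff₀ hden]; linarith
  have hu : ur s 1 = 1 := by
    unfold ur
    rw [min_eq_left h1, max_eq_right zero_le_one]
  unfold Wr
  rw [hu]; ring

lemma Wr_s0 {τ : ℝ} (hτ0 : 0 ≤ τ) (hτ1 : τ ≤ 1) : Wr 0 τ = (1 + τ)/3 := by
  have hu : ur 0 τ = τ := by
    unfold ur
    norm_num
    rw [min_eq_right hτ1, max_eq_right hτ0]
  unfold Wr
  rw [hu]; ring

/-- The key identity: the reparametrized square lies over the correct base point. -/
lemma keyA {s τ : ℝ} (hs0 : 0 ≤ s) (hs1 : s ≤ 1) (hτ0 : 0 ≤ τ) (hτ1 : τ ≤ 1) :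
    max (g0r (Wr s τ)) (Sr s τ) = s := by
  have hden : (0:ℝ) < 3 - 2*s := by linarith
  obtain ⟨hWl, hWr⟩ := Wr_bounds (τ := τ) hs0 hs1
  have hg_le : g0r (Wr s τ) ≤ s := by
    unfold g0r
    refine max_le hs0 (max_le ?_ ?_) <;> nlinarith
  have hS_le : Sr s τ ≤ s := min_le_left _ _
  rcases lt_or_ge (3*τ) s with h3 | h3
  · -- left collar : u = 0, W = (1-s)/3, g0r = s
    have hu : ur s τ = 0 := by
      unfold ur
      rw [max_eq_left]
      refine le_trans (min_le_right _ _) ?_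
      apply div_nonpos_of_nonpos_of_nonneg <;> linarith
    have hW : Wr s τ = (1 - s)/3 := by unfold Wr; rw [hu]; ring
    have hg : g0r (Wr s τ) = s := by
      rw [hW, g0r_eq_left (by linarith)]; ring
    rw [hg, max_eq_left hS_le]
  · rcases lt_or_ge (3 - 3*τ) s with h4 | h4
    · -- right collar : u = 1, W = (2+s)/3, g0r = s
      have h1 : (1:ℝ) ≤ (3*τ - s)/(3 - 2*s) := by
        rw [le_div_iff₀ hden]; linarith
      have hu : ur s τ = 1 := by
        unfold ur
        rw [min_eq_left h1, max_eq_right zero_le_one]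
      have hW : Wr s τ = (2 + s)/3 := by unfold Wr; rw [hu]; ring
      have hg : g0r (Wr s τ) = s := by
        rw [hW, g0r_eq_right (by linarith)]; ring
      rw [hg, max_eq_left hS_le]
    · -- middle : Sr = s
      have hS : Sr s τ = s := by
        unfold Sr
        rw [min_eq_left (le_min h3 h4)]
      rw [hS, max_eq_right hg_le]

lemma Sr_contF {α : Type*} [TopologicalSpace α] {S T : α → ℝ}
    (hS : Continuous S) (hT : Continuous T) :
    Continuous fun a => Sr (S a) (T a) := by
  unfold Sr; fun_prop

lemma Wr_contF {α : Type*} [TopologicalSpace α] {S T : α → ℝ}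
    (hS : Continuous S) (hT : Continuous T) (hden : ∀ a, 3 - 2*(S a) ≠ 0) :
    Continuous fun a => Wr (S a) (T a) := by
  have hq : Continuous fun a => (3*(T a) - S a)/(3 - 2*(S a)) :=
    Continuous.div (by fun_prop) (by fun_prop) hden
  unfold Wr ur
  fun_prop

/-- Continuity from a finite closed cover. -/
lemma continuous_of_finite_closed_cover {α β : Type*} [TopologicalSpace α]
    [TopologicalSpace β] {f : α → β} {k : ℕ} (C : Fin k → Set α)
    (hC : ∀ i, IsClosed (C i)) (hcov : ∀ a, ∃ i, a ∈ C i)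
    (hf : ∀ i, ContinuousOn f (C i)) : Continuous f := by
  rw [continuous_iff_isClosed]
  intro F hF
  have hU : f ⁻¹' F = ⋃ i, (C i ∩ f ⁻¹' F) := by
    ext a
    simp only [Set.mem_preimage, Set.mem_iUnion, Set.mem_inter_iff]
    constructor
    · intro ha
      obtain ⟨i, hi⟩ := hcov a
      exact ⟨i, hi, ha⟩
    · rintro ⟨i, -, ha⟩
      exact ha
  rw [hU]
  exact isClosed_iUnion_of_finite fun i => (hf i).preimage_isClosed_of_isClosed (hC i) hF

/-- The index of the strip containing time `t`. -/
noncomputable def idxT (n : ℕ) (t : unitInterval) : ℕ := min (n-2) ⌊(t:ℝ)*((n:ℝ)-1)⌋₊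

lemma idxT_lt {n : ℕ} (hn : 2 ≤ n) (t : unitInterval) : idxT n t < n - 1 := by
  have h1 : idxT n t ≤ n - 2 := min_le_left _ _
  omega

lemma nsub_cast {n : ℕ} (hn : 2 ≤ n) : ((n-2 : ℕ) : ℝ) = (n:ℝ) - 2 := by
  have : ((n-2:ℕ):ℝ) = ((n:ℕ):ℝ) - ((2:ℕ):ℝ) := Nat.cast_sub hn
  simpa using this

lemma idxT_le {n : ℕ} (hn : 2 ≤ n) (t : unitInterval) :
    (idxT n t : ℝ) ≤ (t:ℝ)*((n:ℝ)-1) := by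
  have hr0 : 0 ≤ (t:ℝ)*((n:ℝ)-1) := by
    apply mul_nonneg t.2.1
    have : (2:ℝ) ≤ (n:ℝ) := by exact_mod_cast hn
    linarith
  calc  (idxT n t : ℝ) ≤ (⌊(t:ℝ)*((n:ℝ)-1)⌋₊ : ℝ) :=
          Nat.cast_le.mpr (min_le_right _ _)
    _ ≤ _ := Nat.floor_le hr0

lemma idxT_ge {n : ℕ} (hn : 2 ≤ n) (t : unitInterval) :
    (t:ℝ)*((n:ℝ)-1) ≤ (idxT n t : ℝ) + 1 := by
  have hn2 : (2:ℝ) ≤ (n:ℝ) := by exact_mod_cast hn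
  rcases le_or_gt (⌊(t:ℝ)*((n:ℝ)-1)⌋₊) (n-2) with hc | hc
  · have : idxT n t = ⌊(t:ℝ)*((n:ℝ)-1)⌋₊ := min_eq_right hc
    rw [this]
    exact le_of_lt (Nat.lt_floor_add_one _)
  · have h1 : idxT n t = n - 2 := min_eq_left (le_of_lt hc)
    rw [h1, nsub_cast hn]
    have : (t:ℝ)*((n:ℝ)-1) ≤ 1*((n:ℝ)-1) :=
      mul_le_mul_of_nonneg_right t.2.2 (by linarith)
    linarith

lemma floor_between {r : ℝ} {i : ℕ} (h1 : (i:ℝ) ≤ r) (h2 : r ≤ (i:ℝ)+1) :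
    ⌊r⌋₊ = i ∨ (⌊r⌋₊ = i+1 ∧ r = (i:ℝ)+1) := by
  have hr0 : 0 ≤ r := le_trans (Nat.cast_nonneg i) h1
  rcases lt_or_eq_of_le h2 with hlt | heq
  · left
    have hub : ⌊r⌋₊ < i + 1 := by
      rw [Nat.floor_lt hr0]
      push_cast
      linarith
    have hlb : i ≤ ⌊r⌋₊ := Nat.le_floor (by exact_mod_cast h1)
    omega
  · right
    constructor
    · rw [heq]
      rw [show (i:ℝ)+1 = ((i+1:ℕ):ℝ) by push_cast; ring]
      exact Nat.floor_natCast _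
    · exact heq

/-- The prescribed boundary values on three sides of the `i`-th strip, parametrized by
the bottom edge. -/
noncomputable def phi0 {E B X : Type*} [TopologicalSpace E] {p : E → B}
    (n : ℕ) (f : X → ParPath p) (h : X × unitInterval → FibProd p n) (i : Fin (n-1)) :
    X × unitInterval → E := fun z =>
  if (z.2 : ℝ) ≤ 1/3 then
    (h (z.1, pI (1 - 3*(z.2:ℝ)))).1 ⟨i.1, by have := i.isLt; omega⟩
  else if (z.2:ℝ) ≤ 2/3 then
    (f z.1).1 (pI (((i.1:ℝ) + (3*(z.2:ℝ) - 1))/((n:ℝ)-1)))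
  else
    (h (z.1, pI (3*(z.2:ℝ) - 2))).1 ⟨i.1+1, by have := i.isLt; omega⟩

section Phi0

variable {E B X : Type*} [TopologicalSpace E] {p : E → B}
    {n : ℕ} {f : X → ParPath p} {h : X × unitInterval → FibProd p n} {i : Fin (n-1)}

lemma phi0_left {w : unitInterval} (hw : (w:ℝ) ≤ 1/3) (x : X) :
    phi0 n f h i (x, w) =
      (h (x, pI (1 - 3*(w:ℝ)))).1 ⟨i.1, by have := i.isLt; omega⟩ := by
  unfold phi0
  rw [if_pos hw]

lemma phi0_midf {w : unitInterval} (h1 : 1/3 < (w:ℝ)) (h2 : (w:ℝ) ≤ 2/3) (x : X) :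
    phi0 n f h i (x, w) = (f x).1 (pI (((i.1:ℝ) + (3*(w:ℝ) - 1))/((n:ℝ)-1))) := by
  unfold phi0
  rw [if_neg (not_le.mpr h1), if_pos h2]

lemma phi0_right {w : unitInterval} (h2 : 2/3 < (w:ℝ)) (x : X) :
    phi0 n f h i (x, w) =
      (h (x, pI (3*(w:ℝ) - 2))).1 ⟨i.1+1, by have := i.isLt; omega⟩ := by
  unfold phi0
  rw [if_neg (not_le.mpr (lt_trans (by norm_num) h2)), if_neg (not_le.mpr h2)]

lemma seqTime_eq_pI {n : ℕ} (j : Fin n) :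
    seqTime n j = pI ((j.1:ℝ)/((n:ℝ)-1)) := by
  have hm := (seqTime n j).2
  apply Subtype.ext
  rw [show ((pI ((j.1:ℝ)/((n:ℝ)-1)) : ℝ)) = (j.1:ℝ)/((n:ℝ)-1) from pI_coe hm.1 hm.2]
  rfl

lemma phi0_a (x : X) (s : unitInterval) :
    phi0 n f h i (x, pI ((1-(s:ℝ))/3)) =
      (h (x, s)).1 ⟨i.1, by have := i.isLt; omega⟩ := by
  have hmem : (1-(s:ℝ))/3 ∈ Set.Icc (0:ℝ) 1 :=
    ⟨by linarith [s.2.2], by linarith [s.2.1]⟩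
  have hco : ((pI ((1-(s:ℝ))/3)) : ℝ) = (1-(s:ℝ))/3 := pI_coe hmem.1 hmem.2
  rw [phi0_left (by rw [hco]; linarith [s.2.1]) x, hco,
    show (1:ℝ) - 3*((1-(s:ℝ))/3) = (s:ℝ) by ring, pI_val]

lemma phi0_b (h0 : ∀ x, h (x, 0) = PiN p n (f x)) (x : X) (s : unitInterval) :
    phi0 n f h i (x, pI ((2+(s:ℝ))/3)) =
      (h (x, s)).1 ⟨i.1+1, by have := i.isLt; omega⟩ := by
  have hmem : (2+(s:ℝ))/3 ∈ Set.Icc (0:ℝ) 1 :=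
    ⟨by linarith [s.2.1], by linarith [s.2.2]⟩
  have hco : ((pI ((2+(s:ℝ))/3)) : ℝ) = (2+(s:ℝ))/3 := pI_coe hmem.1 hmem.2
  rcases eq_or_lt_of_le s.2.1 with hs | hs
  · -- s = 0
    have hs0 : s = 0 := Subtype.ext hs.symm
    subst hs0
    have hsc : ((0:unitInterval):ℝ) = 0 := rfl
    rw [phi0_midf (by rw [hco, hsc]; norm_num) (by rw [hco, hsc]; norm_num) x, hco, hsc,
      show ((i.1:ℝ) + (3*((2+(0:ℝ))/3) - 1))/((n:ℝ)-1) = ((i.1+1:ℕ):ℝ)/((n:ℝ)-1) by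
        push_cast; ring,
      ← seqTime_eq_pI (n := n) ⟨i.1+1, by have := i.isLt; omega⟩, h0]
    rfl
  · rw [phi0_right (by rw [hco]; linarith) x, hco,
      show 3*((2+(s:ℝ))/3) - 2 = (s:ℝ) by ring, pI_val]

lemma phi0_m (h0 : ∀ x, h (x, 0) = PiN p n (f x)) (x : X) {τ : ℝ}
    (hτ0 : 0 ≤ τ) (hτ1 : τ ≤ 1) :
    phi0 n f h i (x, pI ((1+τ)/3)) =
      (f x).1 (pI (((i.1:ℝ)+τ)/((n:ℝ)-1))) := by
  have hmem : (1+τ)/3 ∈ Set.Icc (0:ℝ) 1 := ⟨by linarith, by linarith⟩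
  have hco : ((pI ((1+τ)/3)) : ℝ) = (1+τ)/3 := pI_coe hmem.1 hmem.2
  rcases eq_or_lt_of_le hτ0 with ht | ht
  · -- τ = 0
    subst ht
    rw [phi0_left (by rw [hco]; norm_num) x, hco,
      show (1:ℝ) - 3*((1+(0:ℝ))/3) = 0 by ring, pI_zero, h0,
      show ((i.1:ℝ) + 0)/((n:ℝ)-1) = ((i.1:ℕ):ℝ)/((n:ℝ)-1) by push_cast; ring,
      ← seqTime_eq_pI (n := n) ⟨i.1, by have := i.isLt; omega⟩]
    rfl
  · rw [phi0_midf (by rw [hco]; linarith) (by rw [hco]; linarith) x, hco,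
      show (3:ℝ)*((1+τ)/3) - 1 = τ by ring]

lemma phi0_p (hn : 2 ≤ n) (h0 : ∀ x, h (x, 0) = PiN p n (f x)) (x : X) (w : unitInterval) :
    p (phi0 n f h i (x, w)) = p ((h (x, pI (g0r (w:ℝ)))).1 ⟨0, by omega⟩) := by
  rcases le_or_gt (w:ℝ) (1/3) with h1 | h1
  · rw [phi0_left h1, g0r_eq_left h1]
    exact (h _).2 _ _
  · rcases le_or_gt (w:ℝ) (2/3) with h2 | h2
    · rw [phi0_midf h1 h2, g0r_eq_mid (le_of_lt h1) h2, pI_zero, h0]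
      show p ((f x).1 _) = p ((f x).1 (seqTime n ⟨0, _⟩))
      exact (f x).2 _ _
    · rw [phi0_right h2, g0r_eq_right (le_of_lt h2)]
      exact (h _).2 _ _

lemma phi0_equiv {G : Type*} (σX : G → X → X) (σE : G → E → E)
    (hfE : ∀ a x t, (f (σX a x)).1 t = σE a ((f x).1 t))
    (hhE : ∀ a x s j, (h (σX a x, s)).1 j = σE a ((h (x, s)).1 j))
    (a : G) (x : X) (w : unitInterval) :
    phi0 n f h i (σX a x, w) = σE a (phi0 n f h i (x, w)) := by
  rcases le_or_gt (w:ℝ) (1/3) with h1 | h1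
  · rw [phi0_left h1, phi0_left h1]
    exact hhE a x _ _
  · rcases le_or_gt (w:ℝ) (2/3) with h2 | h2
    · rw [phi0_midf h1 h2, phi0_midf h1 h2]
      exact hfE a x _
    · rw [phi0_right h2, phi0_right h2]
      exact hhE a x _ _

lemma phi0_cont [TopologicalSpace X] (hn : 2 ≤ n)
    (hf : Continuous f) (hh : Continuous h)
    (h0 : ∀ x, h (x, 0) = PiN p n (f x)) :
    Continuous (phi0 n f h i) := by
  have hpI : Continuous pI := continuous_projIcc
  have hfe : Continuous fun z : X × unitInterval => (f z.1).1 :=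
    continuous_subtype_val.comp (hf.comp continuous_fst)
  have hhc : ∀ (j : ℕ) (hj : j < n) (g : X × unitInterval → ℝ), Continuous g →
      Continuous (fun z : X × unitInterval => (h (z.1, pI (g z))).1 ⟨j, hj⟩) := by
    intro j hj g hg
    have hc : Continuous fun z : X × unitInterval => h (z.1, pI (g z)) :=
      hh.comp (continuous_fst.prodMk (hpI.comp hg))
    exact (continuous_apply _).comp (continuous_subtype_val.comp hc)
  have hfc : ∀ (g : X × unitInterval → ℝ), Continuous g →
      Continuous (fun z : X × unitInterval => (f z.1).1 (pI (g z))) := by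
    intro g hg
    exact continuous_eval.comp (hfe.prodMk (hpI.comp hg))
  have hw : Continuous fun z : X × unitInterval => (z.2 : ℝ) := by fun_prop
  unfold phi0
  apply Continuous.if_le
  · exact hhc i.1 (by have := i.isLt; omega) _ (by fun_prop)
  · apply Continuous.if_le
    · exact hfc _ (by fun_prop)
    · exact hhc (i.1+1) (by have := i.isLt; omega) _ (by fun_prop)
    · exact hw
    · exact continuous_const
    · -- boundary at w = 2/3
      intro z hz
      rw [show ((i.1:ℝ) + (3*(z.2:ℝ) - 1))/((n:ℝ)-1) = ((i.1+1:ℕ):ℝ)/((n:ℝ)-1) by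
          rw [hz]; push_cast; ring,
        ← seqTime_eq_pI (n := n) ⟨i.1+1, by have := i.isLt; omega⟩,
        show (3:ℝ)*(z.2:ℝ) - 2 = 0 by rw [hz]; ring, pI_zero, h0]
      rfl
  · exact hw
  · exact continuous_const
  · -- boundary at w = 1/3
    intro z hz
    rw [if_pos (by rw [hz]; norm_num : (z.2:ℝ) ≤ 2/3),
      show (1:ℝ) - 3*(z.2:ℝ) = 0 by rw [hz]; ring, pI_zero, h0,
      show ((i.1:ℝ) + (3*(z.2:ℝ) - 1))/((n:ℝ)-1) = ((i.1:ℕ):ℝ)/((n:ℝ)-1) by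
        rw [hz]; push_cast; ring,
      ← seqTime_eq_pI (n := n) ⟨i.1, by have := i.isLt; omega⟩]
    rfl

end Phi0

/-- The `G`-homotopy lifting property, transferred along `ULift` so that it applies to
test spaces in the same universe as `E`. -/
lemma GFib_hlp {G : Type u_G} [Group G] [TopologicalSpace G] {E : Type u} {B : Type v}
    [TopologicalSpace E] [TopologicalSpace B] {σE : G → E → E} {σB : G → B → B}
    {p : E → B} (hp : IsGFibration G σE σB p)
    (Y : Type u) [TopologicalSpace Y] (σY : G → Y → Y) (hσY : IsGAction G σY)
    (f : Y → E) (h : Y × unitInterval → B)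
    (hf : Continuous f) (hfeq : ∀ a x, f (σY a x) = σE a (f x))
    (hh : Continuous h) (hheq : ∀ a x t, h (σY a x, t) = σB a (h (x, t)))
    (h0 : ∀ x, h (x, 0) = p (f x)) :
    ∃ hl : Y × unitInterval → E, Continuous hl ∧
      (∀ a x t, hl (σY a x, t) = σE a (hl (x, t))) ∧
      (∀ x, hl (x, 0) = f x) ∧ (∀ x t, p (hl (x, t)) = h (x, t)) := by
  obtain ⟨hpc, hpeq, hHLP⟩ := hp
  let σZ : G → ULift.{v} Y → ULift.{v} Y := fun a z => ⟨σY a z.down⟩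
  have h1 : IsGAction G σZ := by
    refine ⟨fun z => ?_, fun a b z => ?_, ?_⟩
    · show (⟨σY 1 z.down⟩ : ULift.{v} Y) = z
      rw [hσY.1]
    · show (⟨σY (a*b) z.down⟩ : ULift.{v} Y) = ⟨σY a (σZ b z).down⟩
      show (⟨σY (a*b) z.down⟩ : ULift.{v} Y) = ⟨σY a (σY b z.down)⟩
      rw [hσY.2.1]
    · show Continuous fun q : G × ULift.{v} Y => (⟨σY q.1 q.2.down⟩ : ULift.{v} Y)
      exact continuous_uliftUp.comp (hσY.2.2.comp
        (continuous_fst.prodMk (continuous_uliftDown.comp continuous_snd)))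
  obtain ⟨K, hKc, hKeq, hK0, hKp⟩ := hHLP (ULift.{v} Y) inferInstance σZ h1
    (fun z => f z.down) (fun q => h (q.1.down, q.2))
    (hf.comp continuous_uliftDown)
    (fun a z => hfeq a z.down)
    (hh.comp ((continuous_uliftDown.comp continuous_fst).prodMk continuous_snd))
    (fun a z t => hheq a z.down t)
    (fun z => h0 z.down)
  exact ⟨fun q => K (⟨q.1⟩, q.2),
    hKc.comp ((continuous_uliftUp.comp continuous_fst).prodMk continuous_snd),
    fun a x t => hKeq a ⟨x⟩ t, fun x => hK0 ⟨x⟩, fun x t => hKp ⟨x⟩ t⟩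

end AuxPiN

theorem stmt_3 {G : Type*} [Group G] [TopologicalSpace G] [IsTopologicalGroup G]
    [CompactSpace G] {E B : Type*} [TopologicalSpace E] [TopologicalSpace B]
    [MulAction G E] [ContinuousSMul G E] [MulAction G B] [ContinuousSMul G B]
    (p : E → B)
    (hp : IsGFibration G (fun (a : G) (e : E) => a • e) (fun (a : G) (b : B) => a • b) p)
    (n : ℕ) (hn : 2 ≤ n) :
    IsGFibration G
      (parPathAct (fun (a : G) (e : E) => a • e) (fun a => continuous_const_smul a) p
        (fun a e e' h => by rw [hp.2.1, hp.2.1, h]))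
      (fibProdAct (fun (a : G) (e : E) => a • e) p
        (fun a e e' h => by rw [hp.2.1, hp.2.1, h]) n)
      (PiN p n) := by
  have hpc : Continuous p := hp.1
  have hpeq : ∀ (a : G) (e : E), p (a • e) = a • p e := hp.2.1
  have hn0 : 0 < n := by omega
  have hn1 : (0:ℝ) < (n:ℝ) - 1 := by
    have : (2:ℝ) ≤ (n:ℝ) := by exact_mod_cast hn
    linarith
  have hne : (n:ℝ) - 1 ≠ 0 := ne_of_gt hn1
  refine ⟨?_, ?_, ?_⟩
  · -- continuity of `PiN`
    refine Continuous.subtype_mk ?_ _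
    exact continuous_pi fun i =>
      (continuous_eval_const (seqTime n i)).comp continuous_subtype_val
  · -- equivariance of `PiN`
    intro a γ
    rfl
  · -- the homotopy lifting property
    intro X tX σX hσX f h hf hfeq hh hheq h0
    letI : TopologicalSpace X := tX
    -- componentwise equivariance of the data
    have hfE : ∀ (a : G) (x : X) (t : unitInterval),
        (f (σX a x)).1 t = a • ((f x).1 t) := by
      intro a x t
      rw [hfeq a x]
      rfl
    have hhE : ∀ (a : G) (x : X) (s : unitInterval) (j : Fin n),
        (h (σX a x, s)).1 j = a • ((h (x, s)).1 j) := by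
      intro a x s j
      rw [hheq a x s]
      rfl
    -- one application of the HLP of `p` per strip
    have hexK : ∀ _ : Fin (n-1), ∃ K : (X × unitInterval) × unitInterval → E,
        Continuous K ∧
        (∀ (a : G) (z : X × unitInterval) (t : unitInterval),
          K ((σX a z.1, z.2), t) = a • (K (z, t))) ∧
        (∀ z, K (z, 0) = phi0 n f h ‹Fin (n-1)› z) ∧
        (∀ (z : X × unitInterval) (s' : unitInterval),
          p (K (z, s')) =
            p ((h (z.1, pI (max (g0r (z.2:ℝ)) (s':ℝ)))).1 ⟨0, by omega⟩)) := by
      intro i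
      have hσY : IsGAction G (fun (a : G) (z : X × unitInterval) => (σX a z.1, z.2)) := by
        refine ⟨fun z => ?_, fun a b z => ?_, ?_⟩
        · show (σX 1 z.1, z.2) = z
          rw [hσX.1]
        · show (σX (a*b) z.1, z.2) = (σX a (σX b z.1), z.2)
          rw [hσX.2.1]
        · show Continuous fun q : G × (X × unitInterval) => (σX q.1 q.2.1, q.2.2)
          exact (hσX.2.2.comp (continuous_fst.prodMk
            (continuous_fst.comp continuous_snd))).prodMk
            (continuous_snd.comp continuous_snd)
      have hh'c : Continuous (fun q : (X × unitInterval) × unitInterval =>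
          p ((h (q.1.1, pI (max (g0r (q.1.2:ℝ)) (q.2:ℝ)))).1 ⟨0, by omega⟩)) := by
        have hin : Continuous (fun q : (X × unitInterval) × unitInterval =>
            h (q.1.1, pI (max (g0r (q.1.2:ℝ)) (q.2:ℝ)))) := by
          refine hh.comp ((continuous_fst.comp continuous_fst).prodMk
            (continuous_projIcc.comp (Continuous.max
              (g0r_cont.comp (continuous_subtype_val.comp
                (continuous_snd.comp continuous_fst)))
              (continuous_subtype_val.comp continuous_snd))))
        exact hpc.comp ((continuous_apply _).comp (continuous_subtype_val.comp hin))
      obtain ⟨K, hKc, hKeq, hK0, hKp⟩ := GFib_hlp hp (X × unitInterval)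
        (fun (a : G) (z : X × unitInterval) => (σX a z.1, z.2)) hσY
        (phi0 n f h i)
        (fun q => p ((h (q.1.1, pI (max (g0r (q.1.2:ℝ)) (q.2:ℝ)))).1 ⟨0, by omega⟩))
        (phi0_cont hn hf hh h0)
        (fun a z => phi0_equiv σX (fun (a : G) (e : E) => a • e) hfE hhE a z.1 z.2)
        hh'c
        (by
          intro a z t
          show p ((h (σX a z.1, _)).1 _) = _
          rw [hhE, hpeq])
        (by
          intro z
          show p ((h (z.1, pI (max (g0r (z.2:ℝ)) ((0:unitInterval):ℝ)))).1 _) = _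
          have hc0 : ((0:unitInterval):ℝ) = 0 := rfl
          rw [hc0, max_eq_left (g0r_nonneg _)]
          exact (phi0_p hn h0 z.1 z.2).symm)
      exact ⟨K, hKc, fun a z t => hKeq a z t, hK0, hKp⟩
    choose K hKc hKeq hK0 hKp using hexK
    -- values of K along the bottom edges of the strips
    have edge0 : ∀ (i : Fin (n-1)) (x : X) (s : unitInterval),
        K i ((x, pI (Wr (s:ℝ) 0)), pI (Sr (s:ℝ) 0)) =
          (h (x, s)).1 ⟨i.1, by have := i.isLt; omega⟩ := by
      intro i x s
      rw [Sr_t0 s.2.1, pI_zero, hK0, Wr_t0 s.2.1 s.2.2]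
      exact phi0_a x s
    have edge1 : ∀ (i : Fin (n-1)) (x : X) (s : unitInterval),
        K i ((x, pI (Wr (s:ℝ) 1)), pI (Sr (s:ℝ) 1)) =
          (h (x, s)).1 ⟨i.1 + 1, by have := i.isLt; omega⟩ := by
      intro i x s
      rw [Sr_t1 s.2.1, pI_zero, hK0, Wr_t1 s.2.1 s.2.2]
      exact phi0_b h0 x s
    have htmem : ∀ r : ℝ, 0 ≤ max 0 (min 1 r) ∧ max 0 (min 1 r) ≤ 1 :=
      fun r => ⟨le_max_left _ _, max_le zero_le_one (min_le_left _ _)⟩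
    have htau : ∀ t : unitInterval,
        max 0 (min 1 ((t:ℝ)*((n:ℝ)-1) - (idxT n t:ℝ))) =
          (t:ℝ)*((n:ℝ)-1) - (idxT n t:ℝ) := by
      intro t
      rw [min_eq_right (by linarith [idxT_ge hn t]),
        max_eq_right (by linarith [idxT_le hn t])]
    -- the assembled lift of the whole homotopy, as a map (X × I) × I → E
    set M : (X × unitInterval) × unitInterval → E := fun q =>
      K ⟨idxT n q.2, idxT_lt hn q.2⟩
        ((q.1.1, pI (Wr (q.1.2:ℝ)
          (max 0 (min 1 ((q.2:ℝ)*((n:ℝ)-1) - (idxT n q.2 : ℝ)))))),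
         pI (Sr (q.1.2:ℝ)
          (max 0 (min 1 ((q.2:ℝ)*((n:ℝ)-1) - (idxT n q.2 : ℝ)))))) with hM
    -- M lies over the right point of the base
    have hMp : ∀ (q : X × unitInterval) (t : unitInterval),
        p (M (q, t)) = p ((h q).1 ⟨0, by omega⟩) := by
      rintro ⟨x, s⟩ t
      simp only [hM]
      rw [hKp]
      have hm := htmem ((t:ℝ)*((n:ℝ)-1) - (idxT n t : ℝ))
      rw [pI_coe (Wr_mem s.2.1 s.2.2).1 (Wr_mem s.2.1 s.2.2).2,
        pI_coe (Sr_mem s.2.1 s.2.2 hm.1 hm.2).1 (Sr_mem s.2.1 s.2.2 hm.1 hm.2).2,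
        keyA s.2.1 s.2.2 hm.1 hm.2, pI_val]
    -- M at time s = 0 is the initial lift
    have hM0 : ∀ (x : X) (t : unitInterval), M ((x, 0), t) = (f x).1 t := by
      intro x t
      simp only [hM]
      have hc0 : ((0:unitInterval):ℝ) = 0 := rfl
      have hm := htmem ((t:ℝ)*((n:ℝ)-1) - (idxT n t : ℝ))
      rw [hc0, Sr_s0 hm.1 hm.2, pI_zero, hK0, Wr_s0 hm.1 hm.2,
        phi0_m h0 x hm.1 hm.2, htau t]
      have harg : ((idxT n t : ℝ) + ((t:ℝ)*((n:ℝ)-1) - (idxT n t:ℝ)))/((n:ℝ)-1)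
          = (t:ℝ) := by
        field_simp
        ring
      rw [harg, pI_val]
    -- M hits the marked points
    have hMmark : ∀ (x : X) (s : unitInterval) (j : Fin n),
        M ((x, s), seqTime n j) = (h (x, s)).1 j := by
      intro x s j
      simp only [hM]
      have hrj : ((seqTime n j : unitInterval):ℝ)*((n:ℝ)-1) = (j.1:ℝ) := by
        show ((j.1:ℝ)/((n:ℝ)-1))*((n:ℝ)-1) = (j.1:ℝ)
        field_simp
      by_cases hj : j.1 ≤ n-2
      · have hidx : idxT n (seqTime n j) = j.1 := by
          unfold idxT
          rw [hrj, Nat.floor_natCast]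
          exact min_eq_right hj
        have hfin : (⟨idxT n (seqTime n j), idxT_lt hn (seqTime n j)⟩ : Fin (n-1))
            = ⟨j.1, by omega⟩ := Fin.ext hidx
        have hz : max 0 (min 1 (((seqTime n j : unitInterval):ℝ)*((n:ℝ)-1)
            - (idxT n (seqTime n j):ℝ))) = 0 := by
          rw [hrj, hidx]
          norm_num
        rw [hfin, hz, edge0 ⟨j.1, by omega⟩ x s]
      · have hj' : j.1 = n-1 := by have := j.isLt; omega
        have hidx : idxT n (seqTime n j) = n-2 := by
          unfold idxT
          rw [hrj, Nat.floor_natCast, hj']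
          exact min_eq_left (by omega)
        have hcast : (j.1:ℝ) - ((n-2:ℕ):ℝ) = 1 := by
          rw [hj', nsub_cast hn, Nat.cast_sub (by omega : 1 ≤ n)]
          push_cast
          ring
        have hfin : (⟨idxT n (seqTime n j), idxT_lt hn (seqTime n j)⟩ : Fin (n-1))
            = ⟨n-2, by omega⟩ := Fin.ext hidx
        have hz : max 0 (min 1 (((seqTime n j : unitInterval):ℝ)*((n:ℝ)-1)
            - (idxT n (seqTime n j):ℝ))) = 1 := by
          rw [hrj, hidx, hcast]
          norm_num
        rw [hfin, hz, edge1 ⟨n-2, by omega⟩ x s]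
        exact congrArg _ (Fin.ext (show n-2+1 = j.1 by omega))
      -- equivariance of M
    have hMeq : ∀ (a : G) (x : X) (s t : unitInterval),
        M ((σX a x, s), t) = a • M ((x, s), t) := by
      intro a x s t
      simp only [hM]
      exact hKeq _ a (x, _) _
    -- continuity of M via the closed cover by strips
    have hMc : Continuous M := by
      apply continuous_of_finite_closed_cover
        (C := fun i : Fin (n-1) => {q : (X × unitInterval) × unitInterval |
          (i.1:ℝ) ≤ (q.2:ℝ)*((n:ℝ)-1) ∧ (q.2:ℝ)*((n:ℝ)-1) ≤ (i.1:ℝ)+1})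
      · intro i
        have hcr : Continuous fun q : (X × unitInterval) × unitInterval =>
            (q.2:ℝ)*((n:ℝ)-1) := by fun_prop
        rw [Set.setOf_and]
        exact (isClosed_le continuous_const hcr).inter
          (isClosed_le hcr continuous_const)
      · intro q
        exact ⟨⟨idxT n q.2, idxT_lt hn q.2⟩, idxT_le hn q.2, idxT_ge hn q.2⟩
      · intro i
        have hSc : Continuous fun q : (X × unitInterval) × unitInterval =>
            Sr (q.1.2:ℝ) (max 0 (min 1 ((q.2:ℝ)*((n:ℝ)-1) - (i.1:ℝ)))) :=
          Sr_contF (by fun_prop) (by fun_prop)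
        have hWc : Continuous fun q : (X × unitInterval) × unitInterval =>
            Wr (q.1.2:ℝ) (max 0 (min 1 ((q.2:ℝ)*((n:ℝ)-1) - (i.1:ℝ)))) :=
          Wr_contF (by fun_prop) (by fun_prop)
            (fun q => ne_of_gt (by linarith [q.1.2.2.2]))
        have hGc : Continuous fun q : (X × unitInterval) × unitInterval =>
            K i ((q.1.1, pI (Wr (q.1.2:ℝ)
                (max 0 (min 1 ((q.2:ℝ)*((n:ℝ)-1) - (i.1:ℝ)))))),
              pI (Sr (q.1.2:ℝ)
                (max 0 (min 1 ((q.2:ℝ)*((n:ℝ)-1) - (i.1:ℝ)))))) :=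
          (hKc i).comp (((continuous_fst.comp continuous_fst).prodMk
            (continuous_projIcc.comp hWc)).prodMk
            (continuous_projIcc.comp hSc))
        apply ContinuousOn.congr hGc.continuousOn
        intro q hq
        simp only [Set.mem_setOf_eq] at hq
        rcases floor_between hq.1 hq.2 with hfl | ⟨hfl, hreq⟩
        · have hidx : idxT n q.2 = i.1 := by
            unfold idxT
            rw [hfl]
            exact min_eq_right (by have := i.isLt; omega)
          simp only [hM, hidx, Fin.eta]
        · by_cases hcap : i.1 + 1 ≤ n-2
          · have hidx : idxT n q.2 = i.1 + 1 := by
              unfold idxT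
              rw [hfl]
              exact min_eq_right hcap
            have hcst : ((i.1+1 : ℕ):ℝ) = (i.1:ℝ)+1 := by push_cast; ring
            simp only [hM, hidx, hreq, hcst]
            rw [show max 0 (min 1 ((i.1:ℝ)+1 - ((i.1:ℝ)+1))) = 0 by norm_num,
              show max 0 (min 1 ((i.1:ℝ)+1 - (i.1:ℝ))) = 1 by norm_num]
            rw [edge0 ⟨i.1+1, by have := i.isLt; omega⟩ q.1.1 q.1.2,
              edge1 i q.1.1 q.1.2]
          · have hidx : idxT n q.2 = i.1 := by
              unfold idxT
              rw [hfl]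
              have hi : i.1 = n-2 := by have := i.isLt; omega
              rw [← hi]
              exact min_eq_left (by omega)
            simp only [hM, hidx, Fin.eta]
    -- assemble the final lift
    let MC : C((X × unitInterval) × unitInterval, E) := ⟨M, hMc⟩
    refine ⟨fun q => ⟨MC.curry q, fun t1 t2 => by
        show p (M (q, t1)) = p (M (q, t2))
        rw [hMp q t1, hMp q t2]⟩,
      Continuous.subtype_mk MC.curry.continuous _, ?_, ?_, ?_⟩
    · intro a x s
      apply Subtype.ext
      apply ContinuousMap.ext
      intro u
      show M ((σX a x, s), u) = a • M ((x, s), u)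
      exact hMeq a x s u
    · intro x
      apply Subtype.ext
      apply ContinuousMap.ext
      intro t
      show M ((x, 0), t) = (f x).1 t
      exact hM0 x t
    · intro x s
      apply Subtype.ext
      funext j
      show M ((x, s), seqTime n j) = (h (x, s)).1 j
      exact hMmark x s j
end

section
/- Let G be a compact Lie group, p : E → B a G-fibration, f : B' → B a G-map, and let p̃ : B' ×_B E → B' be the pullback G-fibration, where B' ×_B E = {(b', e) ∈ B' × E : f(b') = p(e)} carries the diagonal G-action and p̃(b', e) = b'. Then for every n ≥ 2, TC_{G,n}[p̃ : B' ×_B E → B'] ≤ TC_{G,n}[p : E → B]. -/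
open Set

noncomputable section Helpers


/-- Pasting: a function continuous on two closed sets is continuous on their union. -/
lemma pasteCO {X Y : Type*} [TopologicalSpace X] [TopologicalSpace Y] {F : X → Y}
    {s t : Set X} (hs : IsClosed s) (ht : IsClosed t)
    (hFs : ContinuousOn F s) (hFt : ContinuousOn F t) : ContinuousOn F (s ∪ t) := by
  intro x hx
   
  rcases em (x ∈ s) with h | h
  · rcases em (x ∈ t) with h' | h'
    · exact ContinuousWithinAt.union (hFs x h) (hFt x h')
    · have : ContinuousWithinAt F t x := continuousWithinAt_of_notMem_closure (by rwa [ht.closure_eq])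
      exact ContinuousWithinAt.union (hFs x h) this
  · have h' : x ∈ t := hx.resolve_left h
    have : ContinuousWithinAt F s x := continuousWithinAt_of_notMem_closure (by rwa [hs.closure_eq])
    exact ContinuousWithinAt.union this (hFt x h')

lemma pasteFinset {X Y ι : Type*} [TopologicalSpace X] [TopologicalSpace Y] {F : X → Y}
    (S : Finset ι) (A : ι → Set X) (hA : ∀ i, IsClosed (A i))
    (hF : ∀ i, ContinuousOn F (A i)) : ContinuousOn F (⋃ i ∈ S, A i) := by
  classical
  induction S using Finset.induction_on with
  | empty => simp [continuousOn_empty]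
  | insert _ _ hnot ih =>
    rw [Finset.set_biUnion_insert]
    exact pasteCO (hA _) (by exact isClosed_biUnion_finset fun i _ => hA i) (hF _) ih

lemma pasteFin {X Y : Type*} [TopologicalSpace X] [TopologicalSpace Y] {F : X → Y}
    {k : ℕ} (A : Fin k → Set X) (hA : ∀ i, IsClosed (A i))
    (hF : ∀ i, ContinuousOn F (A i)) : ContinuousOn F (⋃ i, A i) := by
  have := pasteFinset (Finset.univ : Finset (Fin k)) A hA hF
  simpa using this

/-- clamp to [0,1] -/
def clampI (x : ℝ) : ℝ := max 0 (min 1 x)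

lemma clampI_cont : Continuous clampI := by
  unfold clampI; fun_prop

lemma clampI_nonneg (x : ℝ) : 0 ≤ clampI x := le_max_left _ _
lemma clampI_le_one (x : ℝ) : clampI x ≤ 1 := max_le (by norm_num) (min_le_left _ _)
lemma clampI_of_le (x : ℝ) (h : x ≤ 0) : clampI x = 0 := by
  unfold clampI
  rw [max_eq_left]
  exact le_trans (min_le_right _ _) h
lemma clampI_of_ge (x : ℝ) (h : 1 ≤ x) : clampI x = 1 := by
  unfold clampI
  rw [min_eq_left h, max_eq_right] ; norm_num

/-- distance to the nearest integer -/
noncomputable def dInt (w : ℝ) : ℝ := Metric.infDist w (Set.range ((↑) : ℤ → ℝ))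

lemma dInt_cont : Continuous dInt := Metric.continuous_infDist_pt _
lemma dInt_nonneg (w : ℝ) : 0 ≤ dInt w := Metric.infDist_nonneg
lemma dInt_int (k : ℤ) : dInt (k : ℝ) = 0 :=
  Metric.infDist_zero_of_mem ⟨k, rfl⟩
lemma dInt_lt (w : ℝ) {r : ℝ} (h : dInt w < r) : ∃ k : ℤ, |w - k| < r := by
  obtain ⟨y, ⟨k, rfl⟩, hy⟩ := (Metric.infDist_lt_iff (Set.range_nonempty _)).mp h
  exact ⟨k, by rwa [Real.dist_eq] at hy⟩

/-- the indicator-sum computation -/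
lemma sum_clamp_eq {m : ℕ} {w : ℝ} {K : ℕ} (hK : K ≤ m)
    (h1 : ∀ j : Fin m, (j : ℕ) < K → (1:ℝ) ≤ 3 * (w - j) - 1)
    (h0 : ∀ j : Fin m, K ≤ (j : ℕ) → 3 * (w - j) - 1 ≤ 0) :
    ∑ j : Fin m, clampI (3 * (w - j) - 1) = K := by
  have : ∀ j : Fin m, clampI (3 * (w - j) - 1) = if (j : ℕ) < K then (1:ℝ) else 0 := by
    intro j
    by_cases h : (j : ℕ) < K
    · rw [if_pos h]; exact clampI_of_ge _ (h1 j h)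
    · rw [if_neg h]; exact clampI_of_le _ (h0 j (le_of_not_gt h))
  rw [Finset.sum_congr rfl (fun j _ => this j), Fin.sum_univ_eq_sum_range
    (fun j => if j < K then (1:ℝ) else 0) m,
    Finset.sum_ite, Finset.sum_const, Finset.sum_const]
  have hfil : (Finset.range m).filter (fun j => j < K) = Finset.range K := by
    ext j
    simp only [Finset.mem_filter, Finset.mem_range]
    exact ⟨fun h => h.2, fun h => ⟨lt_of_lt_of_le h hK, h⟩⟩
  rw [hfil]
  simp

noncomputable def vR (n : ℕ) (s : ℝ) : ℝ := max 0 (1 - 3 * dInt (((n:ℝ)-1) * s))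
noncomputable def usfR (n : ℕ) (s : ℝ) : ℝ :=
  (∑ j : Fin (n-1), clampI (3 * (((n:ℝ)-1) * s - (j:ℕ)) - 1)) / ((n:ℝ)-1)

lemma vR_cont (n : ℕ) : Continuous (vR n) := by
  unfold vR
  exact continuous_const.max (by
    apply Continuous.sub continuous_const
    exact continuous_const.mul (dInt_cont.comp (by continuity)))

lemma usfR_cont (n : ℕ) : Continuous (usfR n) := by
  unfold usfR
  apply Continuous.div_const
  exact continuous_finset_sum _ fun j _ => clampI_cont.comp (by continuity)

lemma vR_nonneg (n : ℕ) (s : ℝ) : 0 ≤ vR n s := le_max_left _ _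
lemma vR_le_one (n : ℕ) (s : ℝ) : vR n s ≤ 1 := by
  apply max_le (by norm_num)
  have := dInt_nonneg (((n:ℝ)-1) * s)
  linarith

section nge
variable {n : ℕ} (hn : 2 ≤ n)
include hn

lemma nu_pos : (0:ℝ) < (n:ℝ) - 1 := by
  have : (2:ℝ) ≤ (n:ℝ) := by exact_mod_cast hn
  linarith

lemma usfR_nonneg (s : ℝ) : 0 ≤ usfR n s :=
  div_nonneg (Finset.sum_nonneg fun j _ => clampI_nonneg _) (le_of_lt (nu_pos hn))

lemma usfR_le_one {s : ℝ} (hs : s ≤ 1) : usfR n s ≤ 1 := by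
  rw [usfR, div_le_one (nu_pos hn)]
  calc ∑ j : Fin (n-1), clampI (3 * (((n:ℝ)-1) * s - (j:ℕ)) - 1)
      ≤ ∑ _j : Fin (n-1), (1:ℝ) := Finset.sum_le_sum fun j _ => clampI_le_one _
    _ = (n - 1 : ℕ) := by simp
    _ = (n:ℝ) - 1 := by
        have : (1:ℕ) ≤ n := le_trans (by norm_num) hn
        push_cast [Nat.cast_sub this]
        ring

lemma usfR_eq {s : ℝ} {k : ℕ} (hk : k ≤ n - 1)
    (hw : |((n:ℝ)-1) * s - k| < 1/3) : usfR n s = k / ((n:ℝ)-1) := by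
  rw [usfR]
  congr 1
  apply sum_clamp_eq hk
  · intro j hj
    have hj' : (j:ℝ) ≤ (k:ℝ) - 1 := by
      have : (j:ℕ) + 1 ≤ k := hj
      have : ((j:ℕ):ℝ) + 1 ≤ (k:ℝ) := by exact_mod_cast this
      linarith
    have := abs_lt.mp hw
    nlinarith [this.1, this.2]
  · intro j hj
    have hj' : (k:ℝ) ≤ (j:ℝ) := by exact_mod_cast hj
    have := abs_lt.mp hw
    nlinarith [this.1, this.2]

lemma vR_at_node (k : ℕ) : vR n ((k:ℝ) / ((n:ℝ)-1)) = 1 := by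
  have hν := nu_pos hn
  rw [vR]
  have : ((n:ℝ)-1) * ((k:ℝ) / ((n:ℝ)-1)) = ((k:ℤ):ℝ) := by
    push_cast; field_simp
  rw [this, dInt_int]
  norm_num

lemma usfR_at_node {k : ℕ} (hk : k ≤ n - 1) :
    usfR n ((k:ℝ) / ((n:ℝ)-1)) = (k:ℝ) / ((n:ℝ)-1) := by
  have hν := nu_pos hn
  apply usfR_eq hn hk
  have : ((n:ℝ)-1) * ((k:ℝ) / ((n:ℝ)-1)) = (k:ℝ) := by field_simp
  rw [this]
  norm_num

lemma usfR_comb {s : ℝ} (hs0 : 0 ≤ s) (hs1 : s ≤ 1) (hv : 0 < vR n s) :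
    ∃ k : ℕ, k ≤ n - 1 ∧ usfR n s = (k:ℝ) / ((n:ℝ)-1) := by
  have hν := nu_pos hn
  have hd : dInt (((n:ℝ)-1) * s) < 1/3 := by
    rcases (max_choice 0 (1 - 3 * dInt (((n:ℝ)-1) * s))) with h | h
    · rw [vR, h] at hv; exact absurd hv (lt_irrefl 0)
    · rw [vR, h] at hv; linarith
  obtain ⟨k, hk⟩ := dInt_lt _ hd
  have hw := abs_lt.mp hk
  set w := ((n:ℝ)-1) * s with hwdef
  have hw0 : 0 ≤ w := mul_nonneg (le_of_lt hν) hs0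
  have hw1 : w ≤ (n:ℝ) - 1 := by
    calc w ≤ ((n:ℝ)-1) * 1 := by apply mul_le_mul_of_nonneg_left hs1 (le_of_lt hν)
    _ = (n:ℝ) - 1 := mul_one _
  have hk0 : 0 ≤ k := by
    by_contra h
    push_neg at h
    have h1 : k ≤ -1 := by omega
    have : (k:ℝ) ≤ -1 := by exact_mod_cast h1
    linarith [hw.1]
  have hkn : (k:ℝ) ≤ (n:ℝ) - 1 := by
    by_contra h
    push_neg at h
    have h2 : ((n:ℕ):ℝ) - 1 < (k:ℝ) := h
    have : ((n:ℝ) - 1) + 1 ≤ (k:ℝ) := by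
      have hni : ((n:ℤ) - 1) < k := by exact_mod_cast h2
      have : (n:ℤ) - 1 + 1 ≤ k := Int.lt_iff_add_one_le.mp hni
      exact_mod_cast this
    linarith [hw.2]
  have hknZ : k ≤ (n:ℤ) - 1 := by
    have : (k:ℝ) ≤ ((n:ℤ) - 1 : ℤ) := by push_cast; exact hkn
    exact_mod_cast this
  have hcast : ((k.toNat:ℕ):ℝ) = (k:ℝ) := by exact_mod_cast Int.toNat_of_nonneg hk0
  refine ⟨k.toNat, by omega, ?_⟩
  apply usfR_eq hn (by omega)
  rwa [hcast]

end nge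


/-- injectivity of the time points -/
lemma seqTime_inj {n : ℕ} (hn : 2 ≤ n) : Function.Injective (seqTime n) := by
  intro i j h
  have hν := nu_pos hn
  have : ((i:ℕ):ℝ) / ((n:ℝ)-1) = ((j:ℕ):ℝ) / ((n:ℝ)-1) := congrArg Subtype.val h
  have h2 : ((i:ℕ):ℝ) = ((j:ℕ):ℝ) := by
    field_simp at this
    exact_mod_cast this
  exact Fin.ext (by exact_mod_cast h2)

universe uE uB

/-- Main workhorse: strict equivariant sections of `Π_n` over a `G`-invariant open set
from homotopy sections, using the `G`-fibration property of `p`. -/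
lemma strictSection {G : Type*} [Group G] [TopologicalSpace G] {E : Type uE} {B : Type uB}
    [TopologicalSpace E] [TopologicalSpace B]
    [MulAction G E] [ContinuousSMul G E] [MulAction G B] [ContinuousSMul G B]
    (p : E → B)
    (hp : IsGFibration G (fun (a : G) (e : E) => a • e) (fun (a : G) (b : B) => a • b) p)
    (hpc : ∀ (a : G) (e e' : E), p e = p e' → p (a • e) = p (a • e'))
    (n : ℕ) (hn : 2 ≤ n)
    (U : Set (FibProd p n)) (hUo : IsOpen U)
    (hUinv : ∀ (a : G), ∀ x ∈ U, fibProdAct (fun (a : G) (e : E) => a • e) p hpc n a x ∈ U)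
    (s : FibProd p n → ParPath p) (hsc : ContinuousOn s U)
    (hse : ∀ (a : G), ∀ x ∈ U,
      s (fibProdAct (fun (a : G) (e : E) => a • e) p hpc n a x)
        = parPathAct (fun (a : G) (e : E) => a • e) (fun a => continuous_const_smul a) p hpc a (s x))
    (H : FibProd p n × unitInterval → FibProd p n)
    (hHc : ContinuousOn H (U ×ˢ (Set.univ : Set unitInterval)))
    (hH0 : ∀ x ∈ U, H (x, 0) = PiN p n (s x))
    (hH1 : ∀ x ∈ U, H (x, 1) = x)
    (hHe : ∀ (a : G), ∀ x ∈ U, ∀ t,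
      H (fibProdAct (fun (a : G) (e : E) => a • e) p hpc n a x, t)
        = fibProdAct (fun (a : G) (e : E) => a • e) p hpc n a (H (x, t))) :
    ∃ K : {x // x ∈ U} → C(unitInterval, E), Continuous K ∧
      (∀ x t, p (K x t) = p (x.1.1 ⟨0, by omega⟩)) ∧
      (∀ x i, K x (seqTime n i) = x.1.1 i) ∧
      (∀ (a : G) (x : {x // x ∈ U})
        (hax : fibProdAct (fun (a : G) (e : E) => a • e) p hpc n a x.1 ∈ U) t,
        K ⟨_, hax⟩ t = a • K x t) := by
  classical
  have hν := nu_pos hn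
  set σFP := fibProdAct (fun (a : G) (e : E) => a • e) p hpc n with hσFP
  have hsub : Continuous (fun x : {x // x ∈ U} => s x.1) :=
    hsc.comp_continuous continuous_subtype_val (fun x => x.2)
  have hHsub : Continuous (fun z : {x // x ∈ U} × unitInterval => H (z.1.1, z.2)) :=
    hHc.comp_continuous (by fun_prop) (fun z => ⟨z.1.2, trivial⟩)
  set i0 : Fin n := ⟨0, by omega⟩ with hi0
  set c : {x // x ∈ U} × unitInterval → B := fun z => p ((H (z.1.1, z.2)).1 i0) with hcdef
  have hcc : Continuous c :=
    hp.1.comp ((continuous_apply i0).comp (continuous_subtype_val.comp hHsub))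
  have hce : ∀ (a : G) (x : {x // x ∈ U}) (hax : σFP a x.1 ∈ U) (t : unitInterval),
      c (⟨σFP a x.1, hax⟩, t) = a • c (x, t) := by
    intro a x hax t
    show p ((H (σFP a x.1, t)).1 i0) = a • p ((H (x.1, t)).1 i0)
    rw [hHe a x.1 x.2 t]
    exact hp.2.1 a _
  -- interval-valued auxiliary functions
  set vI : unitInterval → unitInterval := fun r => ⟨vR n r, vR_nonneg n r, vR_le_one n r⟩
    with hvI
  set uIv : unitInterval → unitInterval :=
    fun r => ⟨usfR n r, usfR_nonneg hn r, usfR_le_one hn r.2.2⟩ with huIv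
  set ovI : unitInterval → unitInterval :=
    fun r => ⟨1 - vR n r, by linarith [vR_le_one n r], by linarith [vR_nonneg n r]⟩ with hovI
  set TtI : unitInterval → unitInterval → unitInterval := fun r t =>
    ⟨min (vR n r + t.1) 1, le_min (add_nonneg (vR_nonneg n r) t.2.1) zero_le_one,
      min_le_right _ _⟩ with hTtI
  -- the comb
  set comb : Set (unitInterval × unitInterval) :=
    (⋃ i : Fin n, {seqTime n i} ×ˢ (Set.univ : Set unitInterval)) ∪
      ((Set.univ : Set unitInterval) ×ˢ ({0} : Set unitInterval)) with hcomb
  have hΓ : ∀ r : unitInterval, (uIv r, vI r) ∈ comb := by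
    intro r
    rcases eq_or_lt_of_le (vR_nonneg n r) with h0 | hpos
    · exact Or.inr ⟨trivial, show vI r ∈ ({0} : Set unitInterval) from Subtype.ext h0.symm⟩
    · left
      obtain ⟨k, hk, heq⟩ := usfR_comb hn r.2.1 r.2.2 hpos
      refine Set.mem_iUnion.mpr ⟨⟨k, by omega⟩, ?_, trivial⟩
      exact Subtype.ext (by rw [show ((uIv r : unitInterval) : ℝ) = usfR n r from rfl, heq]; rfl)
  -- the prescribed data on the comb
  set P : {x // x ∈ U} × (unitInterval × unitInterval) → E := fun z =>
    if h : ∃ i : Fin n, z.2.1 = seqTime n i then (H (z.1.1, z.2.2)).1 h.choose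
    else (s z.1.1).1 z.2.1 with hP
  have hPtooth : ∀ (x : {x // x ∈ U}) (q t : unitInterval) (i : Fin n) (hq : q = seqTime n i),
      P (x, (q, t)) = (H (x.1, t)).1 i := by
    intro x q t i hq
    have hex : ∃ i : Fin n, q = seqTime n i := ⟨i, hq⟩
    have hch : hex.choose = i := seqTime_inj hn (hex.choose_spec.symm.trans hq)
    rw [hP]
    simp only [dif_pos hex, hch]
  have hPbot : ∀ (x : {x // x ∈ U}) (q : unitInterval),
      P (x, (q, 0)) = (s x.1).1 q := by
    intro x q
    by_cases hex : ∃ i : Fin n, q = seqTime n i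
    · rw [hP]
      simp only [dif_pos hex]
      rw [hH0 x.1 x.2]
      show (s x.1).1 (seqTime n hex.choose) = (s x.1).1 q
      rw [← hex.choose_spec]
    · rw [hP]; simp only [dif_neg hex]
  have hPco : ContinuousOn P ((Set.univ : Set {x // x ∈ U}) ×ˢ comb) := by
    have hdecomp : (Set.univ : Set {x // x ∈ U}) ×ˢ comb =
        (⋃ i : Fin n, (Set.univ : Set {x // x ∈ U}) ×ˢ
          ({seqTime n i} ×ˢ (Set.univ : Set unitInterval))) ∪
        ((Set.univ : Set {x // x ∈ U}) ×ˢ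
          ((Set.univ : Set unitInterval) ×ˢ ({0} : Set unitInterval))) := by
      rw [hcomb, Set.prod_union, Set.prod_iUnion]
    rw [hdecomp]
    apply pasteCO
    · exact isClosed_iUnion_of_finite fun i =>
        isClosed_univ.prod ((isClosed_singleton).prod isClosed_univ)
    · exact isClosed_univ.prod (isClosed_univ.prod isClosed_singleton)
    · apply pasteFin
      · intro i
        exact isClosed_univ.prod ((isClosed_singleton).prod isClosed_univ)
      · intro i
        have h2 : Continuous fun z : {x // x ∈ U} × (unitInterval × unitInterval) =>
            H (z.1.1, z.2.2) :=
          hHsub.comp (continuous_fst.prodMk (continuous_snd.comp continuous_snd))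
        have hcont : Continuous fun z : {x // x ∈ U} × (unitInterval × unitInterval) =>
            (H (z.1.1, z.2.2)).1 i :=
          (continuous_apply i).comp (continuous_subtype_val.comp h2)
        apply hcont.continuousOn.congr
        rintro ⟨x, q, t⟩ ⟨-, hq, -⟩
        exact hPtooth x q t i hq
    · have hcont : Continuous fun z : {x // x ∈ U} × (unitInterval × unitInterval) =>
          (s z.1.1).1 z.2.1 := by
        have : Continuous fun z : {x // x ∈ U} × (unitInterval × unitInterval) =>
            (((s z.1.1).1 : C(unitInterval, E)), z.2.1) := by
          apply Continuous.prodMk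
          · exact continuous_subtype_val.comp (hsub.comp continuous_fst)
          · exact continuous_fst.comp continuous_snd
        exact continuous_eval.comp this
      apply hcont.continuousOn.congr
      rintro ⟨x, q, t⟩ ⟨-, -, (ht : t = 0)⟩
      rw [ht]
      exact hPbot x q
  have hPfib : ∀ (x : {x // x ∈ U}) (q t : unitInterval), (q, t) ∈ comb →
      p (P (x, (q, t))) = c (x, t) := by
    intro x q t hmem
    by_cases hex : ∃ i : Fin n, q = seqTime n i
    · rw [hP]
      simp only [dif_pos hex]
      exact (H (x.1, t)).2 hex.choose i0
    · have ht : t = 0 := by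
        rcases hmem with hl | hr
        · obtain ⟨i, hi, -⟩ := Set.mem_iUnion.mp hl
          exact absurd ⟨i, hi⟩ hex
        · exact hr.2
      rw [ht, hPbot x q]
      show p ((s x.1).1 q) = p ((H (x.1, 0)).1 i0)
      rw [hH0 x.1 x.2]
      exact (s x.1).2 q (seqTime n i0)
  have hPe : ∀ (a : G) (x : {x // x ∈ U}) (hax : σFP a x.1 ∈ U) (q t : unitInterval),
      P (⟨σFP a x.1, hax⟩, (q, t)) = a • P (x, (q, t)) := by
    intro a x hax q t
    by_cases hex : ∃ i : Fin n, q = seqTime n i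
    · rw [hP]
      simp only [dif_pos hex]
      show (H (σFP a x.1, t)).1 hex.choose = a • (H (x.1, t)).1 hex.choose
      rw [hHe a x.1 x.2 t]
      rfl
    · rw [hP]
      simp only [dif_neg hex]
      show (s (σFP a x.1)).1 q = a • (s x.1).1 q
      rw [hse a x.1 x.2]
      rfl
  -- the G-space X for the homotopy lifting
  set X : Type (max uE uB) := ULift.{uB} ({x // x ∈ U} × unitInterval) with hX
  set σX : G → X → X := fun a z =>
    ULift.up (⟨σFP a z.down.1.1, hUinv a z.down.1.1 z.down.1.2⟩, z.down.2) with hσX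
  have hactU : Continuous (fun q : G × {x // x ∈ U} =>
      (⟨σFP q.1 q.2.1, hUinv q.1 q.2.1 q.2.2⟩ : {x // x ∈ U})) := by
    apply Continuous.subtype_mk
    apply Continuous.subtype_mk
    have h1 : Continuous (fun q : G × {x // x ∈ U} => (q.2.1 : FibProd p n)) :=
      continuous_subtype_val.comp continuous_snd
    have h2 : Continuous (fun x : FibProd p n => x.1) := continuous_subtype_val
    exact continuous_pi fun i => continuous_smul.comp (continuous_fst.prodMk
      ((continuous_apply i).comp (h2.comp h1)))
  have hσXact : IsGAction G σX := by
    refine ⟨?_, ?_, ?_⟩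
    · intro z
      rw [hσX]
      apply congrArg ULift.up
      refine Prod.ext ?_ rfl
      exact Subtype.ext (Subtype.ext (funext fun i => one_smul G _))
    · intro a b z
      rw [hσX]
      apply congrArg ULift.up
      refine Prod.ext ?_ rfl
      exact Subtype.ext (Subtype.ext (funext fun i => mul_smul a b _))
    · apply (Homeomorph.ulift.symm.continuous).comp
      apply Continuous.prodMk
      · exact hactU.comp (continuous_fst.prodMk
          (continuous_fst.comp (Homeomorph.ulift.continuous.comp continuous_snd)))
      · exact continuous_snd.comp (Homeomorph.ulift.continuous.comp continuous_snd)
  set ff : X → E := fun z => P (z.down.1, (uIv z.down.2, vI z.down.2)) with hff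
  set hh : X × unitInterval → B := fun w => c (w.1.down.1, TtI w.1.down.2 w.2) with hhh
  have hvIcont : Continuous vI :=
    Continuous.subtype_mk ((vR_cont n).comp continuous_subtype_val) _
  have huIcont : Continuous uIv :=
    Continuous.subtype_mk ((usfR_cont n).comp continuous_subtype_val) _
  have hovIcont : Continuous ovI :=
    Continuous.subtype_mk (continuous_const.sub ((vR_cont n).comp continuous_subtype_val)) _
  have hffc : Continuous ff := by
    apply hPco.comp_continuous
    · apply Continuous.prodMk
      · exact continuous_fst.comp Homeomorph.ulift.continuous
      · apply Continuous.prodMk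
        · exact huIcont.comp (continuous_snd.comp Homeomorph.ulift.continuous)
        · exact hvIcont.comp (continuous_snd.comp Homeomorph.ulift.continuous)
    · exact fun z => ⟨trivial, hΓ z.down.2⟩
  have hffe : ∀ (a : G) (z : X), ff (σX a z) = a • ff z := by
    intro a z
    exact hPe a z.down.1 (hUinv a z.down.1.1 z.down.1.2) (uIv z.down.2) (vI z.down.2)
  have hhhc : Continuous hh := by
    apply hcc.comp
    apply Continuous.prodMk
    · exact continuous_fst.comp (Homeomorph.ulift.continuous.comp continuous_fst)
    · apply Continuous.subtype_mk
      apply Continuous.min _ continuous_const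
      apply Continuous.add
      · exact (vR_cont n).comp (continuous_subtype_val.comp
          (continuous_snd.comp (Homeomorph.ulift.continuous.comp continuous_fst)))
      · exact continuous_subtype_val.comp continuous_snd
  have hhhe : ∀ (a : G) (z : X) (t : unitInterval), hh (σX a z, t) = a • hh (z, t) := by
    intro a z t
    exact hce a z.down.1 (hUinv a z.down.1.1 z.down.1.2) _
  have hhh0 : ∀ z : X, hh (z, 0) = p (ff z) := by
    intro z
    have h1 : TtI z.down.2 0 = vI z.down.2 := by
      apply Subtype.ext
      show min (vR n z.down.2 + ((0 : unitInterval) : ℝ)) 1 = vR n z.down.2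
      rw [show ((0 : unitInterval) : ℝ) = 0 from rfl, add_zero]
      exact min_eq_left (vR_le_one n _)
    rw [hhh]
    show c (z.down.1, TtI z.down.2 0) = p (ff z)
    rw [h1, hff]
    exact (hPfib z.down.1 (uIv z.down.2) (vI z.down.2) (hΓ z.down.2)).symm
  obtain ⟨hl, hlc, hle, hl0, hlp⟩ :=
    hp.2.2 X inferInstance σX hσXact ff hh hffc hffe hhhc hhhe hhh0
  -- the strict section
  refine ⟨fun x => ⟨fun r => hl (ULift.up (x, r), ovI r), ?_⟩, ?_, ?_, ?_, ?_⟩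
  · apply hlc.comp
    apply Continuous.prodMk
    · exact Homeomorph.ulift.symm.continuous.comp (continuous_const.prodMk continuous_id)
    · exact hovIcont
  · apply ContinuousMap.continuous_of_continuous_uncurry
    apply hlc.comp
    apply Continuous.prodMk
    · exact Homeomorph.ulift.symm.continuous.comp
        (continuous_fst.prodMk continuous_snd)
    · exact hovIcont.comp continuous_snd
  · -- fibre condition
    intro x r
    show p (hl (ULift.up (x, r), ovI r)) = p (x.1.1 i0)
    rw [hlp]
    show c (x, TtI r (ovI r)) = p (x.1.1 i0)
    have h1 : TtI r (ovI r) = 1 := by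
      apply Subtype.ext
      show min (vR n r + (1 - vR n r)) 1 = ((1 : unitInterval) : ℝ)
      rw [show vR n r + (1 - vR n r) = 1 by ring]
      simp
    rw [h1, hcdef]
    show p ((H (x.1, 1)).1 i0) = p (x.1.1 i0)
    rw [hH1 x.1 x.2]
  · -- strictness at the sample times
    intro x i
    show hl (ULift.up (x, seqTime n i), ovI (seqTime n i)) = x.1.1 i
    have hval : ((seqTime n i : unitInterval) : ℝ) = ((i : ℕ) : ℝ) / ((n : ℝ) - 1) := rfl
    have hv1 : vR n ((seqTime n i : unitInterval) : ℝ) = 1 := by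
      rw [hval]; exact vR_at_node hn (i : ℕ)
    have hov : ovI (seqTime n i) = 0 := by
      apply Subtype.ext
      show 1 - vR n ((seqTime n i : unitInterval) : ℝ) = ((0 : unitInterval) : ℝ)
      rw [hv1]
      simp
    rw [hov, hl0]
    show P (x, (uIv (seqTime n i), vI (seqTime n i))) = x.1.1 i
    have hu : uIv (seqTime n i) = seqTime n i := by
      apply Subtype.ext
      show usfR n ((seqTime n i : unitInterval) : ℝ) = ((seqTime n i : unitInterval) : ℝ)
      rw [hval]
      exact usfR_at_node hn (by omega)
    have hvv : vI (seqTime n i) = 1 := by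
      apply Subtype.ext
      show vR n ((seqTime n i : unitInterval) : ℝ) = ((1 : unitInterval) : ℝ)
      rw [hv1]; rfl
    rw [hu, hvv, hPtooth x (seqTime n i) 1 i rfl, hH1 x.1 x.2]
  · -- equivariance
    intro a x hax t
    show hl (ULift.up (⟨σFP a x.1, hax⟩, t), ovI t) = a • hl (ULift.up (x, t), ovI t)
    have : (ULift.up (⟨σFP a x.1, hax⟩, t) : X) = σX a (ULift.up (x, t)) := rfl
    rw [this]
    exact hle a (ULift.up (x, t)) (ovI t)

end Helpers

theorem stmt_5 {G : Type*} [Group G] [TopologicalSpace G] [IsTopologicalGroup G]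
    [CompactSpace G] {E B B' : Type*} [TopologicalSpace E] [TopologicalSpace B]
    [TopologicalSpace B'] [MulAction G E] [ContinuousSMul G E] [MulAction G B]
    [ContinuousSMul G B] [MulAction G B'] [ContinuousSMul G B']
    (p : E → B)
    (hp : IsGFibration G (fun (a : G) (e : E) => a • e) (fun (a : G) (b : B) => a • b) p)
    (f : B' → B) (hf : Continuous f) (hfe : ∀ (a : G) (b : B'), f (a • b) = a • f b)
    (n : ℕ) (hn : 2 ≤ n) :
    eqPTC G
        (fun (a : G) (q : {q : B' × E // f q.1 = p q.2}) =>
          (⟨(a • q.1.1, a • q.1.2), by rw [hfe, hp.2.1, q.2]⟩ :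
            {q : B' × E // f q.1 = p q.2}))
        (fun a => by fun_prop)
        (fun q : {q : B' × E // f q.1 = p q.2} => q.1.1)
        (fun a q q' h => congrArg (fun b => a • b) h) n ≤
      eqPTC G (fun (a : G) (e : E) => a • e) (fun a => continuous_const_smul a) p
        (fun a e e' h => by rw [hp.2.1, hp.2.1, h]) n := by
  classical
  have hpc : ∀ (a : G) (e e' : E), p e = p e' → p (a • e) = p (a • e') :=
    fun a e e' h => by rw [hp.2.1, hp.2.1, h]
  set E' := {q : B' × E // f q.1 = p q.2} with hE'
  set p' : E' → B' := fun q => q.1.1 with hp'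
  set σE' : G → E' → E' := fun a q =>
    (⟨(a • q.1.1, a • q.1.2), by rw [hfe, hp.2.1, q.2]⟩ : E') with hσE'
  have hpc' : ∀ (a : G) (q q' : E'), p' q = p' q' → p' (σE' a q) = p' (σE' a q') :=
    fun a q q' h => congrArg (fun b => a • b) h
  have hn0 : 0 < n := by omega
  set i0 : Fin n := ⟨0, hn0⟩ with hi0
  -- the comparison map φ
  have hfib : ∀ z : FibProd p' n, ∀ i j, p ((z.1 i).1.2) = p ((z.1 j).1.2) := by
    intro z i j
    have h1 : (z.1 i).1.1 = (z.1 j).1.1 := z.2 i j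
    calc p (z.1 i).1.2 = f (z.1 i).1.1 := ((z.1 i).2).symm
      _ = f (z.1 j).1.1 := by rw [h1]
      _ = p (z.1 j).1.2 := (z.1 j).2
  set φ : FibProd p' n → FibProd p n := fun z => ⟨fun i => (z.1 i).1.2, hfib z⟩ with hφ
  have hφc : Continuous φ := by
    apply Continuous.subtype_mk
    exact continuous_pi fun i => (continuous_snd.comp continuous_subtype_val).comp
      ((continuous_apply i).comp continuous_subtype_val)
  have hφe : ∀ (a : G) (z : FibProd p' n),
      φ (fibProdAct σE' p' hpc' n a z) = fibProdAct (fun (a : G) (e : E) => a • e) p hpc n a (φ z) :=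
    fun a z => Subtype.ext (funext fun i => rfl)
  rw [eqPTC, eqPTC, eqSecat, eqSecat]
  apply sInf_le_sInf
  rintro N ⟨k, rfl, U, hUo, hUinv, hUcov, hUsec⟩
  refine ⟨k, rfl, fun i => φ ⁻¹' (U i), fun i => (hUo i).preimage hφc, ?_, ?_, ?_⟩
  · -- invariance
    intro i a z hz
    show φ (fibProdAct σE' p' _ n a z) ∈ U i
    have h1 : φ (fibProdAct σE' p' hpc' n a z)
        = fibProdAct (fun (a : G) (e : E) => a • e) p hpc n a (φ z) := hφe a z
    have h2 : φ (fibProdAct σE' p' _ n a z) = φ (fibProdAct σE' p' hpc' n a z) := rfl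
    rw [h2, h1]
    exact hUinv i a (φ z) hz
  · -- covering
    intro z
    obtain ⟨i, hi⟩ := hUcov (φ z)
    exact ⟨i, hi⟩
  · -- sections
    intro i
    obtain ⟨s, hsc, hse, H, hHc, hH0, hH1, hHe⟩ := hUsec i
    obtain ⟨K, hKc, hKfib, hKsamp, hKe⟩ :=
      strictSection p hp hpc n hn (U i) (hUo i) (hUinv i) s hsc hse H hHc
        (fun x hx => hH0 x hx) (fun x hx => hH1 x hx) hHe
    set ψ : {z // z ∈ φ ⁻¹' (U i)} → {x // x ∈ U i} := fun z => ⟨φ z.1, z.2⟩ with hψ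
    have hψc : Continuous ψ := Continuous.subtype_mk (hφc.comp continuous_subtype_val) _
    set s' : FibProd p' n → ParPath p' := fun z =>
      if h : z ∈ φ ⁻¹' (U i) then
        ⟨⟨fun r => ⟨((z.1 i0).1.1, K ⟨φ z, h⟩ r),
            ((z.1 i0).2).trans (by rw [hKfib ⟨φ z, h⟩ r])⟩,
          by
            apply Continuous.subtype_mk
            exact continuous_const.prodMk
              (continuous_eval.comp (continuous_const.prodMk continuous_id))⟩,
          fun a b => rfl⟩
      else ⟨⟨fun _ => z.1 i0, continuous_const⟩, fun a b => rfl⟩ with hs'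
    have hs'mem : ∀ z (h : z ∈ φ ⁻¹' (U i)) (r : unitInterval),
        (s' z).1 r = ⟨((z.1 i0).1.1, K ⟨φ z, h⟩ r),
          ((z.1 i0).2).trans (by rw [hKfib ⟨φ z, h⟩ r])⟩ := by
      intro z h r
      have e : s' z = _ := dif_pos h
      rw [e]
      rfl
    have hstrict : ∀ z (h : z ∈ φ ⁻¹' (U i)), PiN p' n (s' z) = z := by
      intro z h
      apply Subtype.ext
      funext j
      show (s' z).1 (seqTime n j) = z.1 j
      rw [hs'mem z h (seqTime n j)]
      apply Subtype.ext
      have h3 : (z.1 i0).1.1 = (z.1 j).1.1 := (z.2 j i0).symm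
      show ((z.1 i0).1.1, K ⟨φ z, h⟩ (seqTime n j)) = (z.1 j).1
      rw [hKsamp ⟨φ z, h⟩ j, h3]
    refine ⟨s', ?_, ?_, ?_⟩
    · -- continuity on the open set
      rw [continuousOn_iff_continuous_restrict]
      have : Set.restrict (φ ⁻¹' (U i)) s' = fun z : {z // z ∈ φ ⁻¹' (U i)} =>
          (⟨⟨fun r => ⟨(((z.1).1 i0).1.1, K (ψ z) r),
              (((z.1).1 i0).2).trans (by rw [hKfib (ψ z) r])⟩,
            by
              apply Continuous.subtype_mk
              exact continuous_const.prodMk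
                (continuous_eval.comp (continuous_const.prodMk continuous_id))⟩,
            fun a b => rfl⟩ : ParPath p') := by
        funext z
        apply Subtype.ext
        apply ContinuousMap.ext
        intro r
        show (s' z.1).1 r = _
        rw [hs'mem z.1 z.2 r]
        rfl
      change Continuous (Set.restrict (φ ⁻¹' (U i)) s')
      rw [this]

      apply Continuous.subtype_mk
      apply ContinuousMap.continuous_of_continuous_uncurry
      apply Continuous.subtype_mk
      apply Continuous.prodMk
      · have h1 : Continuous (fun q : {z // z ∈ φ ⁻¹' (U i)} × unitInterval =>
            (q.1.1 : FibProd p' n)) := continuous_subtype_val.comp continuous_fst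
        have h2 : Continuous (fun x : FibProd p' n => x.1) := continuous_subtype_val
        exact ((continuous_fst.comp continuous_subtype_val).comp
          ((continuous_apply i0).comp (h2.comp h1)))
      · exact continuous_eval.comp (((hKc.comp hψc).comp continuous_fst).prodMk
          continuous_snd)
    · -- equivariance
      intro a z hz
      have hmem : fibProdAct σE' p' hpc' n a z ∈ φ ⁻¹' (U i) := by
        show φ (fibProdAct σE' p' hpc' n a z) ∈ U i
        rw [hφe a z]
        exact hUinv i a (φ z) hz
      have hax : fibProdAct (fun (a : G) (e : E) => a • e) p hpc n a (φ z) ∈ U i :=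
        hUinv i a (φ z) hz
      apply Subtype.ext
      apply ContinuousMap.ext
      intro r
      show (s' (fibProdAct σE' p' _ n a z)).1 r = σE' a ((s' z).1 r)
      have hre : (s' (fibProdAct σE' p' _ n a z)).1 r
          = (s' (fibProdAct σE' p' hpc' n a z)).1 r := rfl
      rw [hre, hs'mem _ hmem r, hs'mem z hz r]
      apply Subtype.ext
      have hKeq : K ⟨φ (fibProdAct σE' p' hpc' n a z), hmem⟩
          = K ⟨fibProdAct (fun (a : G) (e : E) => a • e) p hpc n a (φ z), hax⟩ :=
        congrArg K (Subtype.ext (hφe a z))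
      refine Prod.ext rfl ?_
      show (K ⟨φ (fibProdAct σE' p' hpc' n a z), hmem⟩) r = a • (K ⟨φ z, hz⟩ r)
      rw [hKeq]
      exact hKe a ⟨φ z, hz⟩ hax r
    · -- the homotopy
      refine ⟨fun q => q.1, continuous_fst.continuousOn, ?_, fun z hz => rfl, fun a z hz t => rfl⟩
      intro z hz
      exact (hstrict z hz).symm
end

section
/- Let G be a compact Lie group and p : E → B a G-fibration such that the fixed-point set E^G is nonempty. Let e ∈ E^G and F := p^{-1}(p(e)). Then F is a G-invariant subspace of E, and for every n ≥ 2, TC_{G,n}(F) ≤ TC_{G,n}[p : E → B]. -/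
open Set

noncomputable section Helpers

universe u v w

theorem continuous_eval_discrete {X ι β : Type*} [TopologicalSpace X] [TopologicalSpace ι]
    [DiscreteTopology ι] [TopologicalSpace β]
    {v : X → ι → β} (hv : Continuous v) {j : X → ι} (hj : Continuous j) :
    Continuous fun x => v x (j x) := by
  rw [continuous_iff_continuousAt]
  intro x₀
  have hev : ∀ᶠ x in nhds x₀, j x = j x₀ := by
    have h1 : IsOpen (j ⁻¹' {j x₀}) := (isOpen_discrete _).preimage hj
    filter_upwards [h1.mem_nhds rfl] with x hx using hx
  have hc : ContinuousAt (fun x => v x (j x₀)) x₀ :=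
    ((continuous_apply (j x₀)).comp hv).continuousAt
  apply hc.congr
  filter_upwards [hev] with x hx
  rw [hx]

/-- The inclusion of the `n`-fold product of the fibre of `p` over `p e` into `FibProd p n`. -/
def jmap {E B : Type*} (p : E → B) (e : E) (n : ℕ)
    (y : Fin n → {x : E // p x = p e}) : FibProd p n :=
  ⟨fun i => (y i).1, fun i j => by rw [(y i).2, (y j).2]⟩

theorem jmap_continuous {E B : Type*} [TopologicalSpace E] (p : E → B) (e : E) (n : ℕ) :
    Continuous (jmap p e n) := by
  apply Continuous.subtype_mk
  exact continuous_pi fun i => continuous_subtype_val.comp (continuous_apply i)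

theorem jmap_diagAct {G E B : Type*} [SMul G E] (p : E → B) (e : E) (n : ℕ)
    (hcomp : ∀ (a : G) (x y : E), p x = p y → p (a • x) = p (a • y))
    (σF : G → {x : E // p x = p e} → {x : E // p x = p e})
    (hσF : ∀ a x, (σF a x).1 = a • x.1) (a : G) (y : Fin n → {x : E // p x = p e}) :
    jmap p e n (diagAct σF n a y) =
      fibProdAct (fun (a : G) (x : E) => a • x) p hcomp n a (jmap p e n y) :=
  Subtype.ext (funext fun i => hσF a (y i))

theorem key {G : Type w} [Group G] [TopologicalSpace G]
    {E : Type u} {B : Type v} [TopologicalSpace E] [TopologicalSpace B]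
    [MulAction G E] [ContinuousSMul G E] [MulAction G B] [ContinuousSMul G B]
    (p : E → B)
    (hp : IsGFibration G (fun (a : G) (e : E) => a • e) (fun (a : G) (b : B) => a • b) p)
    (e : E) (n : ℕ) (hn : 2 ≤ n)
    (hcomp : ∀ (a : G) (x y : E), p x = p y → p (a • x) = p (a • y))
    (σF : G → {x : E // p x = p e} → {x : E // p x = p e})
    (hσF : ∀ a x, (σF a x).1 = a • x.1)
    (hcF : ∀ a, Continuous (σF a))
    (U : Set (FibProd p n)) (hUo : IsOpen U)
    (hUinv : ∀ (a : G), ∀ b ∈ U, fibProdAct (fun (a : G) (x : E) => a • x) p hcomp n a b ∈ U)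
    (s : FibProd p n → ParPath p)
    (hsc : ContinuousOn s U)
    (hseq : ∀ (a : G), ∀ b ∈ U,
      s (fibProdAct (fun (a : G) (x : E) => a • x) p hcomp n a b) =
        parPathAct (fun (a : G) (x : E) => a • x) (fun a => continuous_const_smul a) p hcomp a (s b))
    (H : FibProd p n × unitInterval → FibProd p n)
    (hHc : ContinuousOn H (U ×ˢ (Set.univ : Set unitInterval)))
    (hH0 : ∀ x ∈ U, H (x, 0) = PiN p n (s x))
    (hH1 : ∀ x ∈ U, H (x, 1) = x)
    (hHeq : ∀ (a : G), ∀ x ∈ U, ∀ t,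
      H (fibProdAct (fun (a : G) (x : E) => a • x) p hcomp n a x, t) =
        fibProdAct (fun (a : G) (x : E) => a • x) p hcomp n a (H (x, t))) :
    ∃ s' : (Fin n → {x : E // p x = p e}) → C(unitInterval, {x : E // p x = p e}),
      ContinuousOn s' {y | jmap p e n y ∈ U} ∧
      (∀ (a : G), ∀ b ∈ {y | jmap p e n y ∈ U},
        s' (diagAct σF n a b) = pathAct σF hcF a (s' b)) ∧
      GHomotopicOn G (diagAct σF n) (diagAct σF n)
        (piNMap {x : E // p x = p e} n ∘ s') id {y | jmap p e n y ∈ U} := by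
  classical
  obtain ⟨hpc, hpeqraw, hHLP⟩ := hp
  have hpeq : ∀ (a : G) (x : E), p (a • x) = a • p x := hpeqraw
  set A : G → FibProd p n → FibProd p n :=
    fibProdAct (fun (a : G) (x : E) => a • x) p hcomp n with hA
  have i0 : Fin n := ⟨0, by omega⟩
  have hA1 : ∀ x, A 1 x = x := fun x => Subtype.ext (funext fun i => one_smul G _)
  have hAmul : ∀ (a b : G) (x : FibProd p n), A (a * b) x = A a (A b x) :=
    fun a b x => Subtype.ext (funext fun i => mul_smul a b _)
  have hAc : Continuous fun q : G × FibProd p n => A q.1 q.2 := by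
    apply Continuous.subtype_mk
    exact continuous_pi fun i => continuous_fst.smul
      ((continuous_apply i).comp (continuous_subtype_val.comp continuous_snd))
  have hsrc : Continuous (U.restrict s) := hsc.restrict
  let Hr : ↥U × unitInterval → FibProd p n := fun q => H (q.1.1, q.2)
  have hHrc : Continuous Hr :=
    hHc.comp_continuous ((continuous_subtype_val.comp continuous_fst).prodMk continuous_snd)
      (fun q => Set.mem_prod.2 ⟨q.1.2, trivial⟩)
  let cH : ↥U → unitInterval → B := fun x τ => p ((H (x.1, τ)).1 i0)
  have hcHc : Continuous fun q : ↥U × unitInterval => cH q.1 q.2 :=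
    hpc.comp (((continuous_apply i0).comp continuous_subtype_val).comp hHrc)
  have hcH0 : ∀ (x : ↥U) (u : unitInterval), cH x 0 = p ((s x.1).1 u) := by
    intro x u
    show p ((H (x.1, 0)).1 i0) = _
    rw [hH0 x.1 x.2]
    exact (s x.1).2 (seqTime n i0) u
  have hcH1 : ∀ x : ↥U, cH x 1 = p (x.1.1 i0) := by
    intro x
    show p ((H (x.1, 1)).1 i0) = _
    rw [hH1 x.1 x.2]
  have hcHeq : ∀ (a : G) (x : ↥U) (hx' : A a x.1 ∈ U) (τ : unitInterval),
      cH ⟨A a x.1, hx'⟩ τ = a • cH x τ := by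
    intro a x hx' τ
    show p ((H (A a x.1, τ)).1 i0) = a • p ((H (x.1, τ)).1 i0)
    rw [hHeq a x.1 x.2 τ]
    exact hpeq a _
  -- HLP 1 : straighten the section s into the fibre of p e
  let X₁ := ULift.{v} (↥U × unitInterval)
  let σ₁ : G → X₁ → X₁ := fun a q =>
    ULift.up (⟨A a q.down.1.1, hUinv a q.down.1.1 q.down.1.2⟩, q.down.2)
  have hact₁ : IsGAction G σ₁ := by
    refine ⟨fun q => ?_, fun a b q => ?_, ?_⟩
    · exact congrArg ULift.up (Prod.ext (Subtype.ext (hA1 q.down.1.1)) rfl)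
    · exact congrArg ULift.up (Prod.ext (Subtype.ext (hAmul a b q.down.1.1)) rfl)
    · apply continuous_uliftUp.comp
      apply Continuous.prodMk
      · apply Continuous.subtype_mk
        exact hAc.comp (continuous_fst.prodMk ((continuous_subtype_val.comp continuous_fst).comp
          (continuous_uliftDown.comp continuous_snd)))
      · exact continuous_snd.comp (continuous_uliftDown.comp continuous_snd)
  let f₁ : X₁ → E := fun q => (s q.down.1.1).1 q.down.2
  have hf₁c : Continuous f₁ := by
    have h1 : Continuous fun q : X₁ => ((s q.down.1.1).1 : C(unitInterval, E)) :=
      continuous_subtype_val.comp (hsrc.comp (continuous_fst.comp continuous_uliftDown))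
    exact ContinuousEval.continuous_eval.comp
      (h1.prodMk (continuous_snd.comp continuous_uliftDown))
  have hf₁eq : ∀ (a : G) (q : X₁), f₁ (σ₁ a q) = (fun (a : G) (e : E) => a • e) a (f₁ q) := by
    intro a q
    show (s (A a q.down.1.1)).1 q.down.2 = a • (s q.down.1.1).1 q.down.2
    rw [hseq a q.down.1.1 q.down.1.2]
    rfl
  let h₁ : X₁ × unitInterval → B := fun q => cH q.1.down.1 q.2
  have hh₁c : Continuous h₁ :=
    hcHc.comp ((continuous_fst.comp (continuous_uliftDown.comp continuous_fst)).prodMk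
      continuous_snd)
  have hh₁eq : ∀ (a : G) (q : X₁) (t : unitInterval),
      h₁ (σ₁ a q, t) = (fun (a : G) (b : B) => a • b) a (h₁ (q, t)) := by
    intro a q t
    exact hcHeq a q.down.1 _ t
  have hh₁0 : ∀ q : X₁, h₁ (q, 0) = p (f₁ q) := fun q => hcH0 q.down.1 q.down.2
  obtain ⟨W1, hW1c, hW1eq, hW10, hW1p⟩ :=
    hHLP X₁ inferInstance σ₁ hact₁ f₁ h₁ hf₁c hf₁eq hh₁c hh₁eq hh₁0
  -- projection onto the unit interval and numeric helpers
  set pr : ℝ → unitInterval := Set.projIcc (0:ℝ) 1 zero_le_one with hprdef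
  have hprc : Continuous pr := continuous_projIcc
  have hpr_eq : ∀ (r : ℝ) (t : unitInterval), r = (t:ℝ) → pr r = t := by
    intro r t h
    apply Subtype.ext
    rw [hprdef, Set.projIcc_of_mem zero_le_one (h ▸ t.2)]
    exact h
  have hc0 : ((0:unitInterval):ℝ) = 0 := rfl
  have hc1 : ((1:unitInterval):ℝ) = 1 := rfl
  have habs : ∀ θ : unitInterval, |1 - 2 * (θ:ℝ)| ≤ 1 := by
    intro θ
    rw [abs_le]
    constructor
    · have := θ.2.2; linarith
    · have := θ.2.1; linarith
  -- HLP 2 : the ends of the straightened section are fibrewise homotopic to the identity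
  let X₂ := ULift.{v} (↥U × unitInterval × Fin n)
  let σ₂ : G → X₂ → X₂ := fun a q =>
    ULift.up (⟨A a q.down.1.1, hUinv a q.down.1.1 q.down.1.2⟩, q.down.2)
  have hact₂ : IsGAction G σ₂ := by
    refine ⟨fun q => ?_, fun a b q => ?_, ?_⟩
    · exact congrArg ULift.up (Prod.ext (Subtype.ext (hA1 q.down.1.1)) rfl)
    · exact congrArg ULift.up (Prod.ext (Subtype.ext (hAmul a b q.down.1.1)) rfl)
    · apply continuous_uliftUp.comp
      apply Continuous.prodMk
      · apply Continuous.subtype_mk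
        exact hAc.comp (continuous_fst.prodMk ((continuous_subtype_val.comp continuous_fst).comp
          (continuous_uliftDown.comp continuous_snd)))
      · exact continuous_snd.comp (continuous_uliftDown.comp continuous_snd)
  let f₂ : X₂ → E := fun q =>
    if ((q.down.2.1 : ℝ)) ≤ 1 / 2 then
      W1 (ULift.up (q.down.1, seqTime n q.down.2.2), pr (1 - 2 * (q.down.2.1 : ℝ)))
    else (H (q.down.1.1, pr (2 * (q.down.2.1 : ℝ) - 1))).1 q.down.2.2
  have hθc : Continuous fun q : X₂ => (q.down.2.1 : ℝ) :=
    continuous_subtype_val.comp (continuous_fst.comp (continuous_snd.comp continuous_uliftDown))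
  have hic : Continuous fun q : X₂ => q.down.2.2 :=
    continuous_snd.comp (continuous_snd.comp continuous_uliftDown)
  have hxc : Continuous fun q : X₂ => q.down.1 := continuous_fst.comp continuous_uliftDown
  have hf₂c : Continuous f₂ := by
    apply Continuous.if_le
    · apply hW1c.comp
      apply Continuous.prodMk
      · exact continuous_uliftUp.comp (hxc.prodMk
          ((continuous_of_discreteTopology (f := seqTime n)).comp hic))
      · exact hprc.comp (continuous_const.sub (continuous_const.mul hθc))
    · exact continuous_eval_discrete
        (v := fun q : X₂ => (Hr (q.down.1, pr (2 * (q.down.2.1 : ℝ) - 1))).1)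
        (j := fun q : X₂ => q.down.2.2)
        (continuous_subtype_val.comp (hHrc.comp (hxc.prodMk
          (hprc.comp ((continuous_const.mul hθc).sub continuous_const))))) hic
    · exact hθc
    · exact continuous_const
    · intro q hq
      have e1 : pr (1 - 2 * (q.down.2.1:ℝ)) = 0 := hpr_eq _ _ (by rw [hq, hc0]; norm_num)
      have e2 : pr (2 * (q.down.2.1:ℝ) - 1) = 0 := hpr_eq _ _ (by rw [hq, hc0]; norm_num)
      rw [e1, e2, hW10]
      show (s q.down.1.1).1 (seqTime n q.down.2.2) = (H (q.down.1.1, 0)).1 q.down.2.2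
      rw [hH0 q.down.1.1 q.down.1.2]
      rfl
  have hf₂eq : ∀ (a : G) (q : X₂), f₂ (σ₂ a q) = (fun (a : G) (e : E) => a • e) a (f₂ q) := by
    intro a q
    simp only [f₂]
    split_ifs with h
    · exact hW1eq a (ULift.up (q.down.1, seqTime n q.down.2.2)) _
    · show (H (A a q.down.1.1, pr (2 * (q.down.2.1 : ℝ) - 1))).1 q.down.2.2 = _
      rw [hHeq a q.down.1.1 q.down.1.2]
      rfl
  let h₂ : X₂ × unitInterval → B := fun q =>
    cH q.1.down.1 (pr (max |1 - 2 * (q.1.down.2.1 : ℝ)| (q.2 : ℝ)))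
  have hh₂c : Continuous h₂ :=
    hcHc.comp ((hxc.comp continuous_fst).prodMk (hprc.comp (Continuous.max
      ((continuous_const.sub (continuous_const.mul (hθc.comp continuous_fst))).abs)
      (continuous_subtype_val.comp continuous_snd))))
  have hh₂eq : ∀ (a : G) (q : X₂) (t : unitInterval),
      h₂ (σ₂ a q, t) = (fun (a : G) (b : B) => a • b) a (h₂ (q, t)) := by
    intro a q t
    exact hcHeq a q.down.1 _ _
  have hh₂0 : ∀ q : X₂, h₂ (q, 0) = p (f₂ q) := by
    intro q
    show cH q.down.1 (pr (max |1 - 2 * (q.down.2.1 : ℝ)| ((0:unitInterval) : ℝ))) = p (f₂ q)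
    rw [hc0, max_eq_left (abs_nonneg _)]
    simp only [f₂]
    split_ifs with h
    · rw [abs_of_nonneg (by linarith), hW1p]
    · rw [abs_of_neg (by linarith), neg_sub]
      rw [(H (q.down.1.1, pr (2 * (q.down.2.1:ℝ) - 1))).2 q.down.2.2 i0]
  obtain ⟨W2, hW2c, hW2eq, hW20, hW2p⟩ :=
    hHLP X₂ inferInstance σ₂ hact₂ f₂ h₂ hf₂c hf₂eq hh₂c hh₂eq hh₂0
  -- the candidate section of the fibre and the fibrewise homotopy
  let V : Set (Fin n → {x : E // p x = p e}) := {y | jmap p e n y ∈ U}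
  have hjd : ∀ (a : G) (y : Fin n → {x : E // p x = p e}),
      jmap p e n (diagAct σF n a y) = A a (jmap p e n y) :=
    fun a y => jmap_diagAct p e n hcomp σF hσF a y
  have hend : ∀ (y : Fin n → {x : E // p x = p e}) (hy : jmap p e n y ∈ U)
      (u : unitInterval), p (W1 (ULift.up (⟨jmap p e n y, hy⟩, u), 1)) = p e := by
    intro y hy u
    rw [hW1p]
    show cH ⟨jmap p e n y, hy⟩ 1 = p e
    rw [hcH1]
    exact (y i0).2
  let mkP : ∀ (y : Fin n → {x : E // p x = p e}),
      jmap p e n y ∈ U → C(unitInterval, {x : E // p x = p e}) :=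
    fun y hy =>
      ⟨fun u => ⟨W1 (ULift.up (⟨jmap p e n y, hy⟩, u), 1), hend y hy u⟩,
        by
          apply Continuous.subtype_mk
          exact hW1c.comp ((continuous_uliftUp.comp
            (continuous_const.prodMk continuous_id)).prodMk continuous_const)⟩
  let s' : (Fin n → {x : E // p x = p e}) → C(unitInterval, {x : E // p x = p e}) :=
    fun y => if hy : jmap p e n y ∈ U then mkP y hy else ContinuousMap.const _ ⟨e, rfl⟩
  let Φ : C(↥V × unitInterval, {x : E // p x = p e}) :=
    ⟨fun q => ⟨W1 (ULift.up (⟨jmap p e n q.1.1, q.1.2⟩, q.2), 1), hend q.1.1 q.1.2 q.2⟩,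
      by
        apply Continuous.subtype_mk
        apply hW1c.comp
        refine Continuous.prodMk ?_ continuous_const
        apply continuous_uliftUp.comp
        refine Continuous.prodMk ?_ continuous_snd
        exact Continuous.subtype_mk ((jmap_continuous p e n).comp
          (continuous_subtype_val.comp continuous_fst)) _⟩
  have hs'c : ContinuousOn s' V := by
    rw [continuousOn_iff_continuous_restrict]
    have hres : V.domRestrict s' = fun y : ↥V => Φ.curry y := by
      funext y
      have e1 : s' y.1 = mkP y.1 y.2 := dif_pos y.2
      rw [Set.domRestrict_apply, e1]
      exact ContinuousMap.ext fun u => rfl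
    rw [hres]
    exact Φ.curry.continuous
  have hs'eq : ∀ (a : G), ∀ y ∈ V, s' (diagAct σF n a y) = pathAct σF hcF a (s' y) := by
    intro a y hy
    have hy2 : jmap p e n (diagAct σF n a y) ∈ U := by
      rw [hjd]; exact hUinv a _ hy
    have e1 : s' (diagAct σF n a y) = mkP _ hy2 := dif_pos hy2
    have e2 : s' y = mkP y hy := dif_pos hy
    rw [e1, e2]
    apply ContinuousMap.ext
    intro u
    apply Subtype.ext
    show W1 (ULift.up (⟨jmap p e n (diagAct σF n a y), hy2⟩, u), 1) = (σF a (mkP y hy u)).1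
    rw [hσF]
    have e3 : (ULift.up (⟨jmap p e n (diagAct σF n a y), hy2⟩, u) : X₁)
        = σ₁ a (ULift.up (⟨jmap p e n y, hy⟩, u)) :=
      congrArg ULift.up (Prod.ext (Subtype.ext (hjd a y)) rfl)
    rw [e3, hW1eq]
    rfl
  -- the fibrewise homotopy from the ends of the section to the identity
  let eH : ↥U → unitInterval → Fin n → E := fun x τ i =>
    if (τ : ℝ) ≤ 1/3 then W2 (ULift.up (x, 0, i), pr (3 * (τ:ℝ)))
    else if (τ : ℝ) ≤ 2/3 then W2 (ULift.up (x, pr (3 * (τ:ℝ) - 1), i), 1)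
    else W2 (ULift.up (x, 1, i), pr (3 - 3 * (τ:ℝ)))
  have heHF : ∀ (y : Fin n → {x : E // p x = p e}) (hy : jmap p e n y ∈ U)
      (τ : unitInterval) (i : Fin n), p (eH ⟨jmap p e n y, hy⟩ τ i) = p e := by
    intro y hy τ i
    have hcH1e : cH ⟨jmap p e n y, hy⟩ 1 = p e := by rw [hcH1]; exact (y i0).2
    simp only [eH]
    split_ifs with h1 h2
    · rw [hW2p]
      show cH _ (pr (max |1 - 2 * ((0:unitInterval):ℝ)|
        ((pr (3 * (τ:ℝ)) : unitInterval):ℝ))) = p e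
      have h9 : |1 - 2 * ((0:unitInterval):ℝ)| = 1 := by rw [hc0]; norm_num
      rw [h9, max_eq_left (pr (3 * (τ:ℝ))).2.2, hpr_eq 1 1 hc1.symm]
      exact hcH1e
    · rw [hW2p]
      show cH _ (pr (max |1 - 2 * ((pr (3 * (τ:ℝ) - 1) : unitInterval):ℝ)|
        ((1:unitInterval):ℝ))) = p e
      rw [hc1, max_eq_right (habs _), hpr_eq 1 1 hc1.symm]
      exact hcH1e
    · rw [hW2p]
      show cH _ (pr (max |1 - 2 * ((1:unitInterval):ℝ)|
        ((pr (3 - 3 * (τ:ℝ)) : unitInterval):ℝ))) = p e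
      have h9 : |1 - 2 * ((1:unitInterval):ℝ)| = 1 := by rw [hc1]; norm_num
      rw [h9, max_eq_left (pr (3 - 3 * (τ:ℝ))).2.2, hpr_eq 1 1 hc1.symm]
      exact hcH1e
  have heHeq : ∀ (a : G) (x : ↥U) (hx' : A a x.1 ∈ U) (τ : unitInterval) (i : Fin n),
      eH ⟨A a x.1, hx'⟩ τ i = a • eH x τ i := by
    intro a x hx' τ i
    simp only [eH]
    split_ifs with h1 h2
    · exact hW2eq a (ULift.up (x, 0, i)) _
    · exact hW2eq a (ULift.up (x, pr (3 * (τ:ℝ) - 1), i)) _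
    · exact hW2eq a (ULift.up (x, 1, i)) _
  have heHc : ∀ i : Fin n, Continuous fun q : ↥U × unitInterval => eH q.1 q.2 i := by
    intro i
    apply Continuous.if_le
    · exact hW2c.comp ((continuous_uliftUp.comp (continuous_fst.prodMk
        (continuous_const.prodMk continuous_const))).prodMk
        (hprc.comp (continuous_const.mul (continuous_subtype_val.comp continuous_snd))))
    · apply Continuous.if_le
      · exact hW2c.comp ((continuous_uliftUp.comp (continuous_fst.prodMk
          ((hprc.comp ((continuous_const.mul (continuous_subtype_val.comp continuous_snd)).sub
            continuous_const)).prodMk continuous_const))).prodMk continuous_const)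
      · exact hW2c.comp ((continuous_uliftUp.comp (continuous_fst.prodMk
          (continuous_const.prodMk continuous_const))).prodMk
          (hprc.comp (continuous_const.sub (continuous_const.mul
            (continuous_subtype_val.comp continuous_snd)))))
      · exact continuous_subtype_val.comp continuous_snd
      · exact continuous_const
      · intro q hq
        have e1 : pr (3 * (q.2:ℝ) - 1) = 1 := hpr_eq _ _ (by rw [hq, hc1]; norm_num)
        have e2 : pr (3 - 3 * (q.2:ℝ)) = 1 := hpr_eq _ _ (by rw [hq, hc1]; norm_num)
        rw [e1, e2]
    · exact continuous_subtype_val.comp continuous_snd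
    · exact continuous_const
    · intro q hq
      have e1 : pr (3 * (q.2:ℝ)) = 1 := hpr_eq _ _ (by rw [hq, hc1]; norm_num)
      have e2 : pr (3 * (q.2:ℝ) - 1) = 0 := hpr_eq _ _ (by rw [hq, hc0]; norm_num)
      rw [if_pos (show (q.2:ℝ) ≤ 2/3 by rw [hq]; norm_num), e1, e2]
  let H' : (Fin n → {x : E // p x = p e}) × unitInterval → (Fin n → {x : E // p x = p e}) :=
    fun q => if hy : jmap p e n q.1 ∈ U then
        fun i => ⟨eH ⟨jmap p e n q.1, hy⟩ q.2 i, heHF q.1 hy q.2 i⟩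
      else q.1
  have hH'c : ContinuousOn H' (V ×ˢ (Set.univ : Set unitInterval)) := by
    rw [continuousOn_iff_continuous_restrict]
    have hres : (V ×ˢ (Set.univ : Set unitInterval)).domRestrict H' =
        fun q : ↥(V ×ˢ (Set.univ : Set unitInterval)) =>
          fun i => (⟨eH ⟨jmap p e n q.1.1, q.2.1⟩ q.1.2 i,
            heHF q.1.1 q.2.1 q.1.2 i⟩ : {x : E // p x = p e}) := by
      funext q
      rw [Set.domRestrict_apply]
      exact dif_pos q.2.1
    rw [hres]
    apply continuous_pi
    intro i
    apply Continuous.subtype_mk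
    exact (heHc i).comp ((Continuous.subtype_mk ((jmap_continuous p e n).comp
      (continuous_fst.comp continuous_subtype_val)) _).prodMk
      (continuous_snd.comp continuous_subtype_val))
  have hH'0 : ∀ y ∈ V, H' (y, 0) = (piNMap {x : E // p x = p e} n ∘ s') y := by
    intro y hy
    have e1 : H' (y, 0) = fun i => (⟨eH ⟨jmap p e n y, hy⟩ 0 i, heHF y hy 0 i⟩ :
        {x : E // p x = p e}) := dif_pos hy
    have e2 : s' y = mkP y hy := dif_pos hy
    rw [e1]
    funext i
    apply Subtype.ext
    show eH ⟨jmap p e n y, hy⟩ 0 i = ((s' y) (seqTime n i) : {x : E // p x = p e}).1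
    rw [e2]
    simp only [eH]
    rw [if_pos (show ((0:unitInterval):ℝ) ≤ 1/3 by rw [hc0]; norm_num)]
    rw [hpr_eq (3 * ((0:unitInterval):ℝ)) 0 (by rw [hc0]; norm_num)]
    rw [hW20]
    simp only [f₂]
    rw [if_pos (show ((0:unitInterval):ℝ) ≤ 1/2 by rw [hc0]; norm_num)]
    rw [hpr_eq (1 - 2 * ((0:unitInterval):ℝ)) 1 (by rw [hc0, hc1]; norm_num)]
    rfl
  have hH'1 : ∀ y ∈ V, H' (y, 1) = id y := by
    intro y hy
    have e1 : H' (y, 1) = fun i => (⟨eH ⟨jmap p e n y, hy⟩ 1 i, heHF y hy 1 i⟩ :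
        {x : E // p x = p e}) := dif_pos hy
    rw [e1]
    funext i
    apply Subtype.ext
    show eH ⟨jmap p e n y, hy⟩ 1 i = (y i).1
    simp only [eH]
    rw [if_neg (show ¬ ((1:unitInterval):ℝ) ≤ 1/3 by rw [hc1]; norm_num),
        if_neg (show ¬ ((1:unitInterval):ℝ) ≤ 2/3 by rw [hc1]; norm_num)]
    rw [hpr_eq (3 - 3 * ((1:unitInterval):ℝ)) 0 (by rw [hc0, hc1]; norm_num)]
    rw [hW20]
    simp only [f₂]
    rw [if_neg (show ¬ ((1:unitInterval):ℝ) ≤ 1/2 by rw [hc1]; norm_num)]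
    rw [hpr_eq (2 * ((1:unitInterval):ℝ) - 1) 1 (by rw [hc1]; norm_num)]
    rw [hH1 (jmap p e n y) hy]
    rfl
  have hH'eq : ∀ (a : G), ∀ y ∈ V, ∀ t : unitInterval,
      H' (diagAct σF n a y, t) = diagAct σF n a (H' (y, t)) := by
    intro a y hy t
    have hy2 : jmap p e n (diagAct σF n a y) ∈ U := by rw [hjd]; exact hUinv a _ hy
    have e1 : H' (diagAct σF n a y, t) =
        fun i => (⟨eH ⟨jmap p e n (diagAct σF n a y), hy2⟩ t i,
          heHF _ hy2 t i⟩ : {x : E // p x = p e}) := dif_pos hy2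
    have e2 : H' (y, t) = fun i => (⟨eH ⟨jmap p e n y, hy⟩ t i, heHF y hy t i⟩ :
        {x : E // p x = p e}) := dif_pos hy
    rw [e1, e2]
    funext i
    apply Subtype.ext
    show eH ⟨jmap p e n (diagAct σF n a y), hy2⟩ t i =
      (σF a ⟨eH ⟨jmap p e n y, hy⟩ t i, heHF y hy t i⟩).1
    rw [hσF]
    have e3 : (⟨jmap p e n (diagAct σF n a y), hy2⟩ : ↥U) =
        ⟨A a (jmap p e n y), (hjd a y) ▸ hy2⟩ := Subtype.ext (hjd a y)
    rw [e3]
    exact heHeq a ⟨jmap p e n y, hy⟩ _ t i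
  exact ⟨s', hs'c, hs'eq, H', hH'c, hH'0, hH'1, hH'eq⟩

end Helpers
theorem stmt_6 {G : Type*} [Group G] [TopologicalSpace G] [IsTopologicalGroup G]
    [CompactSpace G] {E B : Type*} [TopologicalSpace E] [TopologicalSpace B]
    [MulAction G E] [ContinuousSMul G E] [MulAction G B] [ContinuousSMul G B]
    (p : E → B)
    (hp : IsGFibration G (fun (a : G) (e : E) => a • e) (fun (a : G) (b : B) => a • b) p)
    (e : E) (he : ∀ a : G, a • e = e) (n : ℕ) (hn : 2 ≤ n) :
    (∀ (a : G) (x : E), p x = p e → p (a • x) = p e) ∧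
    eqTC G
        (fun (a : G) (x : {x : E // p x = p e}) =>
          (⟨a • x.1, by
            have hpe : ∀ (g : G) (y : E), p (g • y) = g • p y := hp.2.1
            rw [hpe, x.2, ← hpe, he]⟩ : {x : E // p x = p e}))
        (fun a => by fun_prop) n ≤
      eqPTC G (fun (a : G) (x : E) => a • x) (fun a => continuous_const_smul a) p
        (fun a x y h => by rw [hp.2.1, hp.2.1, h]) n := by
  have hpeq : ∀ (a : G) (x : E), p (a • x) = a • p x := hp.2.1
  have hfix : ∀ (a : G) (x : E), p x = p e → p (a • x) = p e := by
    intro a x hx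
    rw [hpeq, hx, ← hpeq, he]
  refine ⟨hfix, ?_⟩
  apply le_sInf
  rintro N ⟨k, rfl, U, hUo, hUinv, hUcov, hUsec⟩
  apply sInf_le
  refine ⟨k, rfl, fun i => {y | jmap p e n y ∈ U i}, ?_, ?_, ?_, ?_⟩
  · exact fun i => (hUo i).preimage (jmap_continuous p e n)
  · intro i a y hy
    exact hUinv i a (jmap p e n y) hy
  · intro y
    obtain ⟨i, hi⟩ := hUcov (jmap p e n y)
    exact ⟨i, hi⟩
  · intro i
    obtain ⟨s, hsc, hseq, Hh, hHc, hH0, hH1, hHeq⟩ := hUsec i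
    refine key p hp e n hn _ _ ?_ _ (U i) (hUo i) (hUinv i) s hsc hseq Hh hHc hH0 hH1 hHeq
    exact fun _ _ => rfl
end

section
/- Let G be a compact Lie group, n ≥ 2, and p : E → B a G-fibration with TC_{G,n}[p : E → B] = 1. Suppose there exists e ∈ E^G such that the fibre F := p^{-1}(p(e)) (a G-invariant subspace) is G-connected. Then F is G-contractible. -/
open Set

private lemma aux_sInf_one {S : Set ℕ∞} (h : sInf S = 1)
    (hS : ∀ N ∈ S, ∃ k : ℕ, N = (k : ℕ∞)) : (1 : ℕ∞) ∈ S := by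
  by_contra h1
  have h2 : (2 : ℕ∞) ≤ sInf S := by
    refine le_sInf fun N hN => ?_
    obtain ⟨k, rfl⟩ := hS N hN
    match k, hN with
    | 0, hN => exact absurd (h ▸ sInf_le hN) (by norm_num)
    | 1, hN => exact absurd hN (by simpa using h1)
    | (m+2), hN => exact_mod_cast Nat.le_add_left 2 m
  rw [h] at h2
  norm_num at h2

private lemma aux_proj0 {r : ℝ} (h : r ≤ 0) :
    Set.projIcc (0:ℝ) 1 zero_le_one r = 0 :=
  (Set.projIcc_of_le_left _ h).trans rfl

private lemma aux_proj1 {r : ℝ} (h : 1 ≤ r) :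
    Set.projIcc (0:ℝ) 1 zero_le_one r = 1 :=
  (Set.projIcc_of_right_le _ h).trans rfl

theorem stmt_7 {G : Type*} [Group G] [TopologicalSpace G] [IsTopologicalGroup G]
    [CompactSpace G] {E B : Type*} [TopologicalSpace E] [TopologicalSpace B]
    [MulAction G E] [ContinuousSMul G E] [MulAction G B] [ContinuousSMul G B]
    (p : E → B)
    (hp : IsGFibration G (fun (a : G) (e : E) => a • e) (fun (a : G) (b : B) => a • b) p)
    (n : ℕ) (hn : 2 ≤ n)
    (htc : eqPTC G (fun (a : G) (x : E) => a • x) (fun a => continuous_const_smul a) p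
      (fun a x y h => by rw [hp.2.1, hp.2.1, h]) n = 1)
    (e : E) (he : ∀ a : G, a • e = e)
    (hconn : GConnected G
      (fun (a : G) (x : {x : E // p x = p e}) =>
        (⟨a • x.1, by
          have hpe : ∀ (g : G) (y : E), p (g • y) = g • p y := hp.2.1
          rw [hpe, x.2, ← hpe, he]⟩ : {x : E // p x = p e}))) :
    GContractible G
      (fun (a : G) (x : {x : E // p x = p e}) =>
        (⟨a • x.1, by
          have hpe : ∀ (g : G) (y : E), p (g • y) = g • p y := hp.2.1
          rw [hpe, x.2, ← hpe, he]⟩ : {x : E // p x = p e})) := by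
  classical
  have hpeq : ∀ (a : G) (y : E), p (a • y) = a • p y := hp.2.1
  have hmemF : ∀ (a : G) (x : {x : E // p x = p e}), p (a • x.1) = p e := fun a x => by
    rw [hpeq, x.2, ← hpeq, he]
  -- Extract the section data from `htc`.
  unfold eqPTC eqSecat at htc
  have hmem := aux_sInf_one htc (by rintro N ⟨k, rfl, -⟩; exact ⟨k, rfl⟩)
  obtain ⟨k, hk, U, hUopen, hUinv, hUcov, hUsec⟩ := hmem
  have hk' : k = 1 := by exact_mod_cast hk.symm
  subst hk'
  have hU0 : U 0 = Set.univ := Set.eq_univ_of_forall fun b => by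
    obtain ⟨i, hi⟩ := hUcov b; rwa [Subsingleton.elim 0 i]
  obtain ⟨s, hs_con, hs_eqv, hGH⟩ := hUsec 0
  unfold GHomotopicOn at hGH
  obtain ⟨K, hK_con, hK0, hK1, hK_eqv⟩ := hGH
  have hmemU : ∀ y : FibProd p n, y ∈ U 0 := fun y => hU0 ▸ Set.mem_univ y
  have hs_cont : Continuous s := by
    rw [hU0] at hs_con; exact continuousOn_univ.mp hs_con
  have hK_cont : Continuous K := by
    rw [hU0, Set.univ_prod_univ] at hK_con
    exact continuousOn_univ.mp hK_con
  have hK0' : ∀ (y : FibProd p n) (i : Fin n), (K (y, 0)).1 i = (s y).1 (seqTime n i) :=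
    fun y i => by rw [hK0 y (hmemU y)]; rfl
  have hK1' : ∀ y : FibProd p n, K (y, 1) = y := fun y => hK1 y (hmemU y)
  -- distinguished indices
  obtain ⟨i0, ilast, hi0v, hilastv, hne⟩ :
      ∃ i0 ilast : Fin n, (i0 : ℕ) = 0 ∧ (ilast : ℕ) = n - 1 ∧ ilast ≠ i0 :=
    ⟨⟨0, by omega⟩, ⟨n - 1, by omega⟩, rfl, rfl, by simp [Fin.ext_iff]; omega⟩
  have hcastn : (2:ℝ) ≤ (n:ℝ) := by exact_mod_cast hn
  have hn1 : ((n:ℝ) - 1) ≠ 0 := by linarith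
  have hseq0 : seqTime n i0 = 0 := Subtype.ext (by simp [seqTime, hi0v])
  have hseqlast : seqTime n ilast = 1 := Subtype.ext (by
    have hc : ((ilast : ℕ) : ℝ) = (n:ℝ) - 1 := by
      rw [hilastv, Nat.cast_sub (by omega)]; norm_num
    simp [seqTime, hc, div_self hn1])
  -- the map c : F → FibProd,  x ↦ (x, e, ..., e)
  obtain ⟨c, hc_cont, hc0, hcother, hc_eqv⟩ :
      ∃ c : {x : E // p x = p e} → FibProd p n, Continuous c ∧
        (∀ x, (c x).1 i0 = x.1) ∧ (∀ x i, i ≠ i0 → (c x).1 i = e) ∧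
        (∀ (a : G) (x x' : {x : E // p x = p e}), x'.1 = a • x.1 →
          ∀ i, (c x').1 i = a • (c x).1 i) := by
    refine ⟨fun x => ⟨fun i => if i = i0 then x.1 else e, ?_⟩, ?_, fun x => by simp,
      fun x i hi => by simp [hi], ?_⟩
    · intro i j
      by_cases hi : i = i0 <;> by_cases hj : j = i0 <;> simp [hi, hj, x.2]
    · refine Continuous.subtype_mk (continuous_pi fun i => ?_) _
      by_cases hi : i = i0
      · simp only [if_pos hi]; exact continuous_subtype_val
      · simp only [if_neg hi]; exact continuous_const
    · intro a x x' hx i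
      show (if i = i0 then x'.1 else e) = a • (if i = i0 then x.1 else e)
      by_cases hi : i = i0
      · simp only [if_pos hi]; exact hx
      · simp only [if_neg hi]; exact (he a).symm
  -- equivariance of K ∘ c and s ∘ c at the level of values
  have hKc_eqv : ∀ (a : G) (x x' : {x : E // p x = p e}), x'.1 = a • x.1 →
      ∀ (t : unitInterval) (i : Fin n), (K (c x', t)).1 i = a • (K (c x, t)).1 i := by
    intro a x x' hx t i
    have h3 : c x' = fibProdAct (fun (a : G) (x : E) => a • x) p
        (fun a x y h => by rw [hp.2.1, hp.2.1, h]) n a (c x) :=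
      Subtype.ext (funext fun i => hc_eqv a x x' hx i)
    exact (congrArg (fun z => z.1 i)
      ((congrArg (fun y => K (y, t)) h3).trans (hK_eqv a (c x) (hmemU _) t))).trans rfl
  have hsc_eqv : ∀ (a : G) (x x' : {x : E // p x = p e}), x'.1 = a • x.1 →
      ∀ τ : unitInterval, (s (c x')).1 τ = a • (s (c x)).1 τ := by
    intro a x x' hx τ
    have h3 : c x' = fibProdAct (fun (a : G) (x : E) => a • x) p
        (fun a x y h => by rw [hp.2.1, hp.2.1, h]) n a (c x) :=
      Subtype.ext (funext fun i => hc_eqv a x x' hx i)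
    exact (congrArg (fun γ : ParPath p => γ.1 τ)
      ((congrArg s h3).trans (hs_eqv a (c x) (hmemU _)))).trans rfl
  -- the reparametrization λ
  obtain ⟨lam, hlam_cont, hlam0, hlam1⟩ :
      ∃ lam : unitInterval → unitInterval → unitInterval,
        Continuous (fun z : unitInterval × unitInterval => lam z.1 z.2) ∧
        (∀ r, lam r 0 = r) ∧ (∀ r u, (r = 1 ∨ u = 1) → lam r u = 1) := by
    refine ⟨fun r u => ⟨(r:ℝ) + (u:ℝ) * (1 - (r:ℝ)), ?_, ?_⟩, ?_, ?_, ?_⟩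
    · nlinarith [r.2.1, r.2.2, u.2.1, u.2.2]
    · nlinarith [r.2.1, r.2.2, u.2.1, u.2.2]
    · exact Continuous.subtype_mk
        (((continuous_subtype_val.comp continuous_fst).add
          ((continuous_subtype_val.comp continuous_snd).mul
            (continuous_const.sub (continuous_subtype_val.comp continuous_fst))))) _
    · intro r; exact Subtype.ext (by simp)
    · rintro r u (h | h) <;> subst h
      · exact Subtype.ext (by show (1:ℝ) + (u:ℝ) * (1 - 1) = 1; ring)
      · exact Subtype.ext (by show (r:ℝ) + 1 * (1 - (r:ℝ)) = 1; ring)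
  -- the time-warp w
  obtain ⟨w, hw_cont, hw0val, hw1val, hwb1, hwb2, hwb3⟩ :
      ∃ w : unitInterval → unitInterval, Continuous w ∧ w 0 = 1 ∧ w 1 = 1 ∧
        (∀ t : unitInterval, (t:ℝ) ≤ 1/3 →
          w t = Set.projIcc (0:ℝ) 1 zero_le_one (1 - 3*(t:ℝ))) ∧
        (∀ t : unitInterval, 1/3 < (t:ℝ) → (t:ℝ) ≤ 2/3 → w t = 0) ∧
        (∀ t : unitInterval, 2/3 < (t:ℝ) →
          w t = Set.projIcc (0:ℝ) 1 zero_le_one (3*(t:ℝ) - 2)) := by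
    refine ⟨fun t => Set.projIcc (0:ℝ) 1 zero_le_one (max (1 - 3*(t:ℝ)) (3*(t:ℝ) - 2)),
      continuous_projIcc.comp ((continuous_const.sub
        (continuous_const.mul continuous_subtype_val)).max
        ((continuous_const.mul continuous_subtype_val).sub continuous_const)), ?_, ?_, ?_, ?_, ?_⟩
    · have h1 : max (1 - 3*((0:unitInterval):ℝ)) (3*((0:unitInterval):ℝ) - 2) = 1 := by
        norm_num
      exact (congrArg (Set.projIcc (0:ℝ) 1 zero_le_one) h1).trans (aux_proj1 le_rfl)
    · have h1 : max (1 - 3*((1:unitInterval):ℝ)) (3*((1:unitInterval):ℝ) - 2) = 1 := by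
        norm_num
      exact (congrArg (Set.projIcc (0:ℝ) 1 zero_le_one) h1).trans (aux_proj1 le_rfl)
    · intro t ht
      exact congrArg (Set.projIcc (0:ℝ) 1 zero_le_one) (max_eq_left (by linarith))
    · intro t ht1 ht2
      exact aux_proj0 (max_le (by linarith) (by linarith))
    · intro t ht
      exact congrArg (Set.projIcc (0:ℝ) 1 zero_le_one) (max_eq_right (by linarith))
  -- the first concatenated homotopy Q : F × I → E
  obtain ⟨Q, hQ_cont, hQp, hQ0, hQ1, hQ_eqv⟩ :
      ∃ Q : ({x : E // p x = p e} × unitInterval) → E, Continuous Q ∧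
        (∀ z, p (Q z) = p ((K (c z.1, w z.2)).1 i0)) ∧
        (∀ x, Q (x, 0) = x.1) ∧ (∀ x, Q (x, 1) = e) ∧
        (∀ (a : G) (x x' : {x : E // p x = p e}), x'.1 = a • x.1 →
          ∀ t, Q (x', t) = a • Q (x, t)) := by
    refine ⟨fun z =>
      if (z.2:ℝ) ≤ 1/3 then
        (K (c z.1, Set.projIcc (0:ℝ) 1 zero_le_one (1 - 3*(z.2:ℝ)))).1 i0
      else if (z.2:ℝ) ≤ 2/3 then
        (s (c z.1)).1 (Set.projIcc (0:ℝ) 1 zero_le_one (3*(z.2:ℝ) - 1))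
      else
        (K (c z.1, Set.projIcc (0:ℝ) 1 zero_le_one (3*(z.2:ℝ) - 2))).1 ilast,
      ?_, ?_, ?_, ?_, ?_⟩
    · -- continuity
      have hA : Continuous fun z : {x : E // p x = p e} × unitInterval =>
          (K (c z.1, Set.projIcc (0:ℝ) 1 zero_le_one (1 - 3*(z.2:ℝ)))).1 i0 :=
        (continuous_apply i0).comp (continuous_subtype_val.comp (hK_cont.comp
          ((hc_cont.comp continuous_fst).prodMk (continuous_projIcc.comp
            (continuous_const.sub (continuous_const.mul
              (continuous_subtype_val.comp continuous_snd)))))))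
      have hB : Continuous fun z : {x : E // p x = p e} × unitInterval =>
          (s (c z.1)).1 (Set.projIcc (0:ℝ) 1 zero_le_one (3*(z.2:ℝ) - 1)) := by
        have : Continuous fun z : {x : E // p x = p e} × unitInterval =>
            (((s (c z.1)).1 : C(unitInterval, E)),
              Set.projIcc (0:ℝ) 1 zero_le_one (3*(z.2:ℝ) - 1)) :=
          (continuous_subtype_val.comp (hs_cont.comp (hc_cont.comp continuous_fst))).prodMk
            (continuous_projIcc.comp ((continuous_const.mul
              (continuous_subtype_val.comp continuous_snd)).sub continuous_const))
        exact (ContinuousEval.continuous_eval).comp this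
      have hC : Continuous fun z : {x : E // p x = p e} × unitInterval =>
          (K (c z.1, Set.projIcc (0:ℝ) 1 zero_le_one (3*(z.2:ℝ) - 2))).1 ilast :=
        (continuous_apply ilast).comp (continuous_subtype_val.comp (hK_cont.comp
          ((hc_cont.comp continuous_fst).prodMk (continuous_projIcc.comp
            ((continuous_const.mul (continuous_subtype_val.comp continuous_snd)).sub
              continuous_const)))))
      refine Continuous.if_le hA (Continuous.if_le hB hC
        (continuous_subtype_val.comp continuous_snd) continuous_const ?_)
        (continuous_subtype_val.comp continuous_snd) continuous_const ?_
      · -- inner boundary t = 2/3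
        intro z hz
        have e1 : Set.projIcc (0:ℝ) 1 zero_le_one (3*(z.2:ℝ) - 1) = 1 :=
          aux_proj1 (by rw [hz]; norm_num)
        have e2 : Set.projIcc (0:ℝ) 1 zero_le_one (3*(z.2:ℝ) - 2) = 0 :=
          aux_proj0 (by rw [hz]; norm_num)
        rw [e1, e2, hK0' (c z.1) ilast, hseqlast]
      · -- outer boundary t = 1/3
        intro z hz
        have e1 : Set.projIcc (0:ℝ) 1 zero_le_one (1 - 3*(z.2:ℝ)) = 0 :=
          aux_proj0 (by rw [hz]; norm_num)
        have e2 : Set.projIcc (0:ℝ) 1 zero_le_one (3*(z.2:ℝ) - 1) = 0 :=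
          aux_proj0 (by rw [hz]; norm_num)
        rw [if_pos (by rw [hz]; norm_num : (z.2:ℝ) ≤ 2/3), e1, e2,
          hK0' (c z.1) i0, hseq0]
    · -- fibre computation
      intro z
      dsimp only
      split_ifs with h1 h2
      · rw [hwb1 z.2 h1]
      · rw [hwb2 z.2 (lt_of_not_ge h1) h2, hK0' (c z.1) i0, hseq0]
        exact (s (c z.1)).2 _ _
      · rw [hwb3 z.2 (lt_of_not_ge h2)]
        exact (K (c z.1, _)).2 ilast i0
    · -- value at t = 0
      intro x
      dsimp only
      rw [if_pos (show (((0:unitInterval)):ℝ) ≤ 1/3 by norm_num)]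
      have e1 : Set.projIcc (0:ℝ) 1 zero_le_one (1 - 3*(((0:unitInterval)):ℝ)) = 1 :=
        aux_proj1 (by norm_num)
      rw [e1, hK1', hc0]
    · -- value at t = 1
      intro x
      dsimp only
      rw [if_neg (show ¬(((1:unitInterval)):ℝ) ≤ 1/3 by norm_num),
        if_neg (show ¬(((1:unitInterval)):ℝ) ≤ 2/3 by norm_num)]
      have e1 : Set.projIcc (0:ℝ) 1 zero_le_one (3*(((1:unitInterval)):ℝ) - 2) = 1 :=
        aux_proj1 (by norm_num)
      rw [e1, hK1']
      exact hcother x ilast hne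
    · -- equivariance
      intro a x x' hx t
      dsimp only
      split_ifs with h1 h2
      · exact hKc_eqv a x x' hx _ i0
      · exact hsc_eqv a x x' hx _
      · exact hKc_eqv a x x' hx _ ilast
  -- apply the G-homotopy lifting property
  obtain ⟨L, hL_cont, hL_eqv, hL0, hLp⟩ :=
    hp.2.2 (ULift ({x : E // p x = p e} × unitInterval)) inferInstance
      (fun a z => ULift.up (⟨a • z.down.1.1, hmemF a z.down.1⟩, z.down.2))
      ⟨fun z => by
        cases' z with zd; cases' zd with x t
        exact congrArg ULift.up (Prod.ext (Subtype.ext (one_smul G x.1)) rfl),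
       fun a b z => by
        cases' z with zd; cases' zd with x t
        exact congrArg ULift.up (Prod.ext (Subtype.ext (mul_smul a b x.1)) rfl),
       by
        refine continuous_uliftUp.comp (Continuous.prodMk (Continuous.subtype_mk ?_ _)
          (continuous_snd.comp (continuous_uliftDown.comp continuous_snd)))
        exact continuous_smul.comp (continuous_fst.prodMk
          (continuous_subtype_val.comp (continuous_fst.comp
            (continuous_uliftDown.comp continuous_snd))))⟩
      (fun z => Q z.down)
      (fun z => p ((K (c z.1.down.1, lam (w z.1.down.2) z.2)).1 i0))
      (hQ_cont.comp continuous_uliftDown)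
      (fun a z => hQ_eqv a z.down.1 _ rfl z.down.2)
      (hp.1.comp ((continuous_apply i0).comp (continuous_subtype_val.comp (hK_cont.comp
        ((hc_cont.comp (continuous_fst.comp (continuous_uliftDown.comp continuous_fst))).prodMk
          (hlam_cont.comp ((hw_cont.comp (continuous_snd.comp
            (continuous_uliftDown.comp continuous_fst))).prodMk continuous_snd)))))))
      (fun a z u => by
        dsimp only
        rw [hKc_eqv a z.down.1 _ rfl _ i0, hpeq])
      (fun z => by dsimp only; rw [hlam0]; exact (hQp z.down).symm)
  have hfib : ∀ (z : ULift ({x : E // p x = p e} × unitInterval)) (u : unitInterval),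
      (w z.down.2 = 1 ∨ u = 1) → p (L (z, u)) = p e := by
    intro z u h
    rw [hLp z u, hlam1 _ _ h, hK1', hc0]
    exact z.down.1.2
  -- the final contraction
  obtain ⟨Cm, hCm_cont, hCm_p, hCm0, hCm1, hCm_eqv⟩ :
      ∃ Cm : ({x : E // p x = p e} × unitInterval) → E, Continuous Cm ∧
        (∀ z, p (Cm z) = p e) ∧ (∀ x, Cm (x, 0) = x.1) ∧ (∀ x, Cm (x, 1) = e) ∧
        (∀ (a : G) (x x' : {x : E // p x = p e}), x'.1 = a • x.1 →
          ∀ t, Cm (x', t) = a • Cm (x, t)) := by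
    refine ⟨fun z =>
      if (z.2:ℝ) ≤ 1/3 then
        L (ULift.up (z.1, 0), Set.projIcc (0:ℝ) 1 zero_le_one (3*(z.2:ℝ)))
      else if (z.2:ℝ) ≤ 2/3 then
        L (ULift.up (z.1, Set.projIcc (0:ℝ) 1 zero_le_one (3*(z.2:ℝ) - 1)), 1)
      else
        L (ULift.up (z.1, 1), Set.projIcc (0:ℝ) 1 zero_le_one (3 - 3*(z.2:ℝ))),
      ?_, ?_, ?_, ?_, ?_⟩
    · -- continuity
      have hA : Continuous fun z : {x : E // p x = p e} × unitInterval =>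
          L (ULift.up (z.1, 0), Set.projIcc (0:ℝ) 1 zero_le_one (3*(z.2:ℝ))) :=
        hL_cont.comp ((continuous_uliftUp.comp
          (continuous_fst.prodMk continuous_const)).prodMk
          (continuous_projIcc.comp (continuous_const.mul
            (continuous_subtype_val.comp continuous_snd))))
      have hB : Continuous fun z : {x : E // p x = p e} × unitInterval =>
          L (ULift.up (z.1, Set.projIcc (0:ℝ) 1 zero_le_one (3*(z.2:ℝ) - 1)), 1) :=
        hL_cont.comp ((continuous_uliftUp.comp
          (continuous_fst.prodMk (continuous_projIcc.comp
            ((continuous_const.mul (continuous_subtype_val.comp continuous_snd)).sub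
              continuous_const)))).prodMk continuous_const)
      have hC : Continuous fun z : {x : E // p x = p e} × unitInterval =>
          L (ULift.up (z.1, 1), Set.projIcc (0:ℝ) 1 zero_le_one (3 - 3*(z.2:ℝ))) :=
        hL_cont.comp ((continuous_uliftUp.comp
          (continuous_fst.prodMk continuous_const)).prodMk
          (continuous_projIcc.comp (continuous_const.sub
            (continuous_const.mul (continuous_subtype_val.comp continuous_snd)))))
      refine Continuous.if_le hA (Continuous.if_le hB hC
        (continuous_subtype_val.comp continuous_snd) continuous_const ?_)
        (continuous_subtype_val.comp continuous_snd) continuous_const ?_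
      · intro z hz
        have e1 : Set.projIcc (0:ℝ) 1 zero_le_one (3*(z.2:ℝ) - 1) = 1 :=
          aux_proj1 (by rw [hz]; norm_num)
        have e2 : Set.projIcc (0:ℝ) 1 zero_le_one (3 - 3*(z.2:ℝ)) = 1 :=
          aux_proj1 (by rw [hz]; norm_num)
        rw [e1, e2]
      · intro z hz
        have e1 : Set.projIcc (0:ℝ) 1 zero_le_one (3*(z.2:ℝ)) = 1 :=
          aux_proj1 (by rw [hz]; norm_num)
        have e2 : Set.projIcc (0:ℝ) 1 zero_le_one (3*(z.2:ℝ) - 1) = 0 :=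
          aux_proj0 (by rw [hz]; norm_num)
        rw [if_pos (by rw [hz]; norm_num : (z.2:ℝ) ≤ 2/3), e1, e2]
    · -- stays in the fibre
      intro z
      dsimp only
      split_ifs with h1 h2
      · exact hfib _ _ (Or.inl hw0val)
      · exact hfib _ _ (Or.inr rfl)
      · exact hfib _ _ (Or.inl hw1val)
    · -- value at t = 0
      intro x
      dsimp only
      rw [if_pos (show (((0:unitInterval)):ℝ) ≤ 1/3 by norm_num)]
      have e1 : Set.projIcc (0:ℝ) 1 zero_le_one (3*(((0:unitInterval)):ℝ)) = 0 :=
        aux_proj0 (by norm_num)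
      rw [e1, hL0]
      exact hQ0 x
    · -- value at t = 1
      intro x
      dsimp only
      rw [if_neg (show ¬(((1:unitInterval)):ℝ) ≤ 1/3 by norm_num),
        if_neg (show ¬(((1:unitInterval)):ℝ) ≤ 2/3 by norm_num)]
      have e1 : Set.projIcc (0:ℝ) 1 zero_le_one (3 - 3*(((1:unitInterval)):ℝ)) = 0 :=
        aux_proj0 (by norm_num)
      rw [e1, hL0]
      exact hQ1 x
    · -- equivariance
      intro a x x' hx t
      have hx' : x' = ⟨a • x.1, hmemF a x⟩ := Subtype.ext hx
      dsimp only
      split_ifs with h1 h2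
      · rw [hx']; exact hL_eqv a (ULift.up (x, 0)) _
      · rw [hx']; exact hL_eqv a (ULift.up (x, _)) _
      · rw [hx']; exact hL_eqv a (ULift.up (x, 1)) _
  -- assemble the contraction of the fibre
  refine ⟨⟨e, rfl⟩, fun z => ⟨Cm z, hCm_p z⟩, (hCm_cont.subtype_mk _), ?_, ?_, ?_⟩
  · intro x
    exact Subtype.ext (hCm0 x)
  · intro x
    refine ⟨1, Subtype.ext ?_⟩
    show Cm (x, 1) = (1:G) • e
    rw [hCm1 x]
    exact (one_smul G e).symm
  · intro a x t
    exact Subtype.ext (hCm_eqv a x _ rfl t)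
end

section
/- Let G be a compact Lie group and let p : E → B and p' : E' → B be G-fibrations over the same G-space B which are fibrewise G-homotopy equivalent. Then for every n ≥ 2, TC_{G,n}[p : E → B] = TC_{G,n}[p' : E' → B]. -/
open Set

section Aux

open Set

private lemma continuousOn_if_le' {β γ : Type*} [TopologicalSpace β] [TopologicalSpace γ]
    {f g : β → ℝ} {f' g' : β → γ} {S : Set β}
    (hf : Continuous f) (hg : Continuous g)
    (hf' : ContinuousOn f' S) (hg' : ContinuousOn g' S)
    (hfg : ∀ x ∈ S, f x = g x → f' x = g' x) :
    ContinuousOn (fun x => if f x ≤ g x then f' x else g' x) S := by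
  rw [continuousOn_iff_continuous_restrict] at hf' hg' ⊢
  exact Continuous.if_le hf' hg' (hf.comp continuous_subtype_val)
    (hg.comp continuous_subtype_val) (fun x h => hfg x.1 x.2 h)

/-- Reparametrization `t ↦ min (2t) 1` in the unit interval. -/
private def tOne (t : unitInterval) : unitInterval :=
  ⟨min (2 * (t : ℝ)) 1,
    le_min (by have := t.2.1; linarith) zero_le_one, min_le_right _ _⟩

/-- Reparametrization `t ↦ max (2t - 1) 0` in the unit interval. -/
private def tTwo (t : unitInterval) : unitInterval :=
  ⟨max (2 * (t : ℝ) - 1) 0,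
    le_max_right _ _, max_le (by have := t.2.2; linarith) zero_le_one⟩

private lemma tOne_zero : tOne 0 = 0 := by
  simp [tOne, Subtype.ext_iff]

private lemma tOne_half {t : unitInterval} (h : (t : ℝ) = 1 / 2) : tOne t = 1 := by
  simp [tOne, Subtype.ext_iff, h]

private lemma tTwo_half {t : unitInterval} (h : (t : ℝ) = 1 / 2) : tTwo t = 0 := by
  simp [tTwo, Subtype.ext_iff, h]

private lemma tTwo_one : tTwo 1 = 1 := by
  simp [tTwo, Subtype.ext_iff]; norm_num

private lemma tOne_continuous : Continuous tOne :=
  Continuous.subtype_mk (by fun_prop) _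

private lemma tTwo_continuous : Continuous tTwo :=
  Continuous.subtype_mk (by fun_prop) _

/-- Abstract domination lemma for equivariant sectional category. -/
private lemma eqSecat_le_of_dominate {G Ep Bp Ep' Bp' : Type*}
    [TopologicalSpace Ep] [TopologicalSpace Bp] [TopologicalSpace Ep'] [TopologicalSpace Bp']
    {σE : G → Ep → Ep} {σB : G → Bp → Bp} {σE' : G → Ep' → Ep'} {σB' : G → Bp' → Bp'}
    {p : Ep → Bp} {p' : Ep' → Bp'}
    (F : Bp → Bp') (hFc : Continuous F) (hFe : ∀ a b, F (σB a b) = σB' a (F b))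
    (Φ : Ep' → Ep) (hΦc : Continuous Φ) (hΦe : ∀ a e, Φ (σE' a e) = σE a (Φ e))
    (gm : Bp' → Bp) (hgmc : Continuous gm) (hgme : ∀ a b, gm (σB' a b) = σB a (gm b))
    (hcomm : ∀ e, p (Φ e) = gm (p' e))
    (K : Bp × unitInterval → Bp) (hKc : Continuous K)
    (hK0 : ∀ b, K (b, 0) = gm (F b)) (hK1 : ∀ b, K (b, 1) = b)
    (hKe : ∀ a b t, K (σB a b, t) = σB a (K (b, t))) :
    eqSecat G σE σB p ≤ eqSecat G σE' σB' p' := by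
  apply sInf_le_sInf
  rintro N ⟨k, rfl, U', hUo, hUinv, hUcov, hsec⟩
  refine ⟨k, rfl, fun i => F ⁻¹' U' i, fun i => (hUo i).preimage hFc, ?_, ?_, ?_⟩
  · intro i a b hb
    simp only [Set.mem_preimage] at hb ⊢
    rw [hFe]
    exact hUinv i a _ hb
  · intro b; exact hUcov (F b)
  · intro i
    obtain ⟨s', hs'c, hs'e, H', hH'c, hH'0, hH'1, hH'e⟩ := hsec i
    refine ⟨Φ ∘ s' ∘ F, ?_, ?_, ?_⟩
    · exact hΦc.comp_continuousOn
        (hs'c.comp hFc.continuousOn (fun b hb => hb))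
    · intro a b hb
      simp only [Function.comp_apply]
      rw [hFe, hs'e a _ hb, hΦe]
    · -- the homotopy
      refine ⟨fun q => if (q.2 : ℝ) ≤ 1 / 2 then gm (H' (F q.1, tOne q.2))
          else K (q.1, tTwo q.2), ?_, ?_, ?_, ?_⟩
      · -- continuity
        apply continuousOn_if_le' (by fun_prop) continuous_const
        · refine hgmc.comp_continuousOn (hH'c.comp
            ((hFc.comp continuous_fst).prodMk
              (tOne_continuous.comp continuous_snd)).continuousOn ?_)
          rintro ⟨b, t⟩ ⟨hb, -⟩
          exact ⟨hb, Set.mem_univ _⟩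
        · exact (hKc.comp (continuous_fst.prodMk
            (tTwo_continuous.comp continuous_snd))).continuousOn
        · rintro ⟨b, t⟩ ⟨hb, -⟩ ht
          simp only at ht ⊢
          rw [tOne_half ht, tTwo_half ht, hH'1 _ hb, hK0]
          rfl
      · -- at time 0
        intro b hb
        have h0 : ((0 : unitInterval) : ℝ) ≤ 1 / 2 := by norm_num
        simp only [h0, if_pos, tOne_zero]
        rw [hH'0 _ hb]
        simp only [Function.comp_apply]
        rw [hcomm]
      · -- at time 1
        intro b hb
        have h1 : ¬ ((1 : unitInterval) : ℝ) ≤ 1 / 2 := by norm_num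
        simp only [h1, if_neg, not_false_iff, tTwo_one]
        rw [hK1]
        rfl
      · -- equivariance
        intro a b hb t
        by_cases ht : (t : ℝ) ≤ 1 / 2
        · simp only [ht, if_pos]
          rw [hFe, hH'e a _ hb, hgme]
        · simp only [ht, if_neg, not_false_iff]
          rw [hKe]

end Aux

private lemma eqPTC_le {G : Type*} [Group G] [TopologicalSpace G]
    {E E' B : Type*} [TopologicalSpace E] [TopologicalSpace E']
    [MulAction G E] [ContinuousSMul G E] [MulAction G E'] [ContinuousSMul G E']
    (p : E → B) (p' : E' → B)
    (hpc : ∀ (a : G) (x y : E), p x = p y → p (a • x) = p (a • y))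
    (hp'c : ∀ (a : G) (x y : E'), p' x = p' y → p' (a • x) = p' (a • y))
    (f : E → E') (hfc : Continuous f) (hfe : ∀ (a : G) (x : E), f (a • x) = a • f x)
    (hfp : ∀ x, p' (f x) = p x)
    (g : E' → E) (hgc : Continuous g) (hge : ∀ (a : G) (x : E'), g (a • x) = a • g x)
    (hgp : ∀ x, p (g x) = p' x)
    (hgf : FibrewiseGHomotopic G (fun (a : G) (x : E) => a • x)
      (fun (a : G) (x : E) => a • x) p p (g ∘ f) id) (n : ℕ) :
    eqPTC G (fun (a : G) (x : E) => a • x) (fun a => continuous_const_smul a) p hpc n ≤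
      eqPTC G (fun (a : G) (x : E') => a • x) (fun a => continuous_const_smul a) p' hp'c n := by
  obtain ⟨HK, hHKc, hHK0, hHK1, hHKe, hHKp⟩ := hgf
  unfold eqPTC
  refine eqSecat_le_of_dominate
    (fun x : FibProd p n => (⟨fun i => f (x.1 i), fun i j => by
      rw [hfp, hfp]; exact x.2 i j⟩ : FibProd p' n)) ?_ ?_
    (fun γ : ParPath p' => (⟨(⟨g, hgc⟩ : C(E', E)).comp γ.1, fun s t => by
      simp only [ContinuousMap.comp_apply, ContinuousMap.coe_mk]
      rw [hgp, hgp]; exact γ.2 s t⟩ : ParPath p)) ?_ ?_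
    (fun x : FibProd p' n => (⟨fun i => g (x.1 i), fun i j => by
      rw [hgp, hgp]; exact x.2 i j⟩ : FibProd p n)) ?_ ?_ ?_
    (fun q : FibProd p n × unitInterval =>
      (⟨fun i => HK (q.1.1 i, q.2), fun i j => by
        rw [hHKp, hHKp]; exact q.1.2 i j⟩ : FibProd p n)) ?_ ?_ ?_ ?_
  · exact Continuous.subtype_mk (continuous_pi fun i =>
      hfc.comp ((continuous_apply i).comp continuous_subtype_val)) _
  · intro a b; exact Subtype.ext (funext fun i => hfe a _)
  · exact Continuous.subtype_mk
      ((ContinuousMap.continuous_postcomp ⟨g, hgc⟩).comp continuous_subtype_val) _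
  · intro a γ; exact Subtype.ext (ContinuousMap.ext fun t => hge a _)
  · exact Continuous.subtype_mk (continuous_pi fun i =>
      hgc.comp ((continuous_apply i).comp continuous_subtype_val)) _
  · intro a b; exact Subtype.ext (funext fun i => hge a _)
  · intro γ; exact Subtype.ext rfl
  · exact Continuous.subtype_mk (continuous_pi fun i => hHKc.comp
      (((continuous_apply i).comp (continuous_subtype_val.comp continuous_fst)).prodMk
        continuous_snd)) _
  · intro b; exact Subtype.ext (funext fun i => hHK0 _)
  · intro b; exact Subtype.ext (funext fun i => hHK1 _)
  · intro a b t; exact Subtype.ext (funext fun i => hHKe a _ t)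

theorem stmt_11 {G : Type*} [Group G] [TopologicalSpace G] [IsTopologicalGroup G]
    [CompactSpace G] {E E' B : Type*} [TopologicalSpace E] [TopologicalSpace E']
    [TopologicalSpace B] [MulAction G E] [ContinuousSMul G E] [MulAction G E']
    [ContinuousSMul G E'] [MulAction G B] [ContinuousSMul G B]
    (p : E → B) (p' : E' → B)
    (hp : IsGFibration G (fun (a : G) (x : E) => a • x) (fun (a : G) (b : B) => a • b) p)
    (hp' : IsGFibration G (fun (a : G) (x : E') => a • x) (fun (a : G) (b : B) => a • b) p')
    -- `p` and `p'` are fibrewise `G`-homotopy equivalent: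
    (f : E → E') (hfc : Continuous f) (hfe : ∀ (a : G) (x : E), f (a • x) = a • f x)
    (hfp : ∀ x, p' (f x) = p x)
    (g : E' → E) (hgc : Continuous g) (hge : ∀ (a : G) (x : E'), g (a • x) = a • g x)
    (hgp : ∀ x, p (g x) = p' x)
    (hgf : FibrewiseGHomotopic G (fun (a : G) (x : E) => a • x)
      (fun (a : G) (x : E) => a • x) p p (g ∘ f) id)
    (hfg : FibrewiseGHomotopic G (fun (a : G) (x : E') => a • x)
      (fun (a : G) (x : E') => a • x) p' p' (f ∘ g) id)
    (n : ℕ) (hn : 2 ≤ n) :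
    eqPTC G (fun (a : G) (x : E) => a • x) (fun a => continuous_const_smul a) p
        (fun a x y h => by rw [hp.2.1, hp.2.1, h]) n =
      eqPTC G (fun (a : G) (x : E') => a • x) (fun a => continuous_const_smul a) p'
        (fun a x y h => by rw [hp'.2.1, hp'.2.1, h]) n := by
  exact le_antisymm
    (eqPTC_le p p' _ _ f hfc hfe hfp g hgc hge hgp hgf n)
    (eqPTC_le p' p _ _ g hgc hge hgp f hfc hfe hfp hfg n)
end
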